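/- arXiv:1709.01441 — 5 statements merged into one kernel-verified Lean document; each statement's English description precedes it below -/
import Mathlib

section
/- Let n ∈ ℕ and let a ∈ ℤ, b, c ∈ ℕ with a ≥ -b and c ≥ n·b. Then there exist finite subsets 𝕀_I ⊆ ℕ indexed by subsets I ⊆ {1,…,n} such that for all I, J ⊆ {1,…,n}, |𝕀_I ∩ 𝕀_J| = a·|I ∩ J| - b·|I △ J| + c, where △ denotes symmetric difference. -/
open Finset

/-- Auxiliary block: for index `i`, either the `C_i` block (size `d`) if `i ∈ I`,
or the `B_i` block (size `b`) if `i ∉ I`. -/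
def stmt2blk (m b d : ℕ) {n : ℕ} (I : Finset (Fin n)) (i : Fin n) : Finset ℕ :=
  if i ∈ I then Ico (m + (i : ℕ) * (b + d) + b) (m + (i : ℕ) * (b + d) + b + d)
  else Ico (m + (i : ℕ) * (b + d)) (m + (i : ℕ) * (b + d) + b)

lemma stmt2blk_subset (m b d : ℕ) {n : ℕ} (I : Finset (Fin n)) (i : Fin n) :
    stmt2blk m b d I i ⊆ Ico (m + (i : ℕ) * (b + d)) (m + (i : ℕ) * (b + d) + (b + d)) := by
  unfold stmt2blk
  split_ifs <;> intro x hx <;> simp only [mem_Ico] at hx ⊢ <;> omega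

lemma stmt2blk_disjoint (m b d : ℕ) {n : ℕ} (I J : Finset (Fin n)) {i j : Fin n} (hij : i ≠ j) :
    Disjoint (stmt2blk m b d I i) (stmt2blk m b d J j) := by
  rw [Finset.disjoint_left]
  intro x hxi hxj
  have h1 := stmt2blk_subset m b d I i hxi
  have h2 := stmt2blk_subset m b d J j hxj
  simp only [mem_Ico] at h1 h2
  have hij' : (i : ℕ) ≠ (j : ℕ) := fun h => hij (Fin.ext h)
  rcases lt_or_gt_of_ne hij' with h | h
  · have hm : ((i : ℕ) + 1) * (b + d) ≤ (j : ℕ) * (b + d) := Nat.mul_le_mul_right _ h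
    rw [Nat.succ_mul] at hm
    omega
  · have hm : ((j : ℕ) + 1) * (b + d) ≤ (i : ℕ) * (b + d) := Nat.mul_le_mul_right _ h
    rw [Nat.succ_mul] at hm
    omega

lemma stmt2blk_inter_card (m b d : ℕ) {n : ℕ} (I J : Finset (Fin n)) (i : Fin n) :
    (stmt2blk m b d I i ∩ stmt2blk m b d J i).card =
      (if i ∈ I then (if i ∈ J then d else 0) else (if i ∈ J then 0 else b)) := by
  unfold stmt2blk
  set o := m + (i : ℕ) * (b + d) with ho
  split_ifs with h1 h2 h2
  · rw [inter_self, Nat.card_Ico]; omega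
  · convert Finset.card_empty
    ext x; simp only [mem_inter, mem_Ico, Finset.notMem_empty, iff_false]; omega
  · convert Finset.card_empty
    ext x; simp only [mem_inter, mem_Ico, Finset.notMem_empty, iff_false]; omega
  · rw [inter_self, Nat.card_Ico]; omega

/-- For `n ∈ ℕ`, `a ∈ ℤ`, `b c ∈ ℕ` with `a ≥ -b` and `c ≥ n·b`, there exist finite subsets
`𝕀 I ⊆ ℕ` indexed by the subsets `I` of `{1,…,n}` such that for all `I, J`,
`|𝕀 I ∩ 𝕀 J| = a·|I ∩ J| - b·|I △ J| + c`. -/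
theorem stmt2 (n : ℕ) (a : ℤ) (b c : ℕ) (ha : -(b : ℤ) ≤ a) (hc : (n : ℤ) * b ≤ c) :
    ∃ 𝕀 : Finset (Fin n) → Finset ℕ, ∀ I J : Finset (Fin n),
      ((𝕀 I ∩ 𝕀 J).card : ℤ) =
        a * ((I ∩ J).card : ℤ) - (b : ℤ) * ((symmDiff I J).card : ℤ) + (c : ℤ) := by
  have hnb : n * b ≤ c := by exact_mod_cast hc
  set m := c - n * b with hmdef
  set d := (a + b).toNat with hddef
  have hd : (d : ℤ) = a + b := Int.toNat_of_nonneg (by linarith)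
  have hm : (m : ℤ) = (c : ℤ) - n * b := by
    rw [hmdef]; push_cast [Nat.cast_sub hnb]; ring
  refine ⟨fun I => range m ∪ univ.biUnion (stmt2blk m b d I), fun I J => ?_⟩
  -- disjointness of range m from all blocks
  have hrange : ∀ (K : Finset (Fin n)) (i : Fin n), Disjoint (range m) (stmt2blk m b d K i) := by
    intro K i
    rw [Finset.disjoint_left]
    intro x hx hx'
    have := stmt2blk_subset m b d K i hx'
    simp only [mem_Ico] at this
    simp only [mem_range] at hx
    omega
  -- the intersection splits nicely
  have hkey : (range m ∪ univ.biUnion (stmt2blk m b d I)) ∩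
      (range m ∪ univ.biUnion (stmt2blk m b d J)) =
      range m ∪ univ.biUnion (fun i => stmt2blk m b d I i ∩ stmt2blk m b d J i) := by
    ext x
    simp only [mem_inter, mem_union, mem_biUnion, mem_univ, true_and]
    constructor
    · rintro ⟨hI | ⟨i, hi⟩, hJ | ⟨j, hj⟩⟩
      · exact Or.inl hI
      · exact Or.inl hI
      · exact Or.inl hJ
      · rcases eq_or_ne i j with rfl | hne
        · exact Or.inr ⟨i, hi, hj⟩
        · exact absurd hj (Finset.disjoint_left.mp (stmt2blk_disjoint m b d I J hne) hi)
    · rintro (h | ⟨i, hi⟩)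
      · exact ⟨Or.inl h, Or.inl h⟩
      · exact ⟨Or.inr ⟨i, hi.1⟩, Or.inr ⟨i, hi.2⟩⟩
  rw [hkey]
  have hdisj : Disjoint (range m) (univ.biUnion (fun i => stmt2blk m b d I i ∩ stmt2blk m b d J i)) := by
    rw [Finset.disjoint_biUnion_right]
    intro i _
    exact (hrange I i).mono_right inter_subset_left
  rw [Finset.card_union_of_disjoint hdisj, Finset.card_biUnion (fun i _ j _ hij =>
    ((stmt2blk_disjoint m b d I I hij).mono inter_subset_left inter_subset_left))]
  have hsum : ∑ i : Fin n, (stmt2blk m b d I i ∩ stmt2blk m b d J i).card =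
      d * (I ∩ J).card + b * ((I ∪ J)ᶜ.card) := by
    have : ∀ i : Fin n, (stmt2blk m b d I i ∩ stmt2blk m b d J i).card =
        (if i ∈ I ∩ J then d else 0) + (if i ∈ (I ∪ J)ᶜ then b else 0) := by
      intro i
      rw [stmt2blk_inter_card]
      simp only [mem_inter, mem_compl, mem_union, not_or]
      by_cases h1 : i ∈ I <;> by_cases h2 : i ∈ J <;> simp [h1, h2]
    rw [Finset.sum_congr rfl (fun i _ => this i), Finset.sum_add_distrib]
    congr 1
    · rw [Finset.sum_ite_mem, univ_inter, Finset.sum_const, smul_eq_mul, mul_comm]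
    · rw [Finset.sum_ite_mem, univ_inter, Finset.sum_const, smul_eq_mul, mul_comm]
  rw [Finset.card_range, hsum]
  -- now pure arithmetic
  have hcompl : ((I ∪ J)ᶜ.card : ℤ) = (n : ℤ) - (I ∪ J).card := by
    rw [Finset.card_compl]
    have : (I ∪ J).card ≤ n := by simpa using Finset.card_le_card (Finset.subset_univ (I ∪ J))
    rw [Fintype.card_fin, Nat.cast_sub this]
  have huni : ((I ∪ J).card : ℤ) + ((I ∩ J).card : ℤ) = (I.card : ℤ) + J.card := by
    exact_mod_cast congrArg (Nat.cast : ℕ → ℤ) (Finset.card_union_add_card_inter I J)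
  have hsd : ((symmDiff I J).card : ℤ) = (I.card : ℤ) + J.card - 2 * (I ∩ J).card := by
    have h1 : symmDiff I J = (I ∪ J) \ (I ∩ J) := by
      ext x
      simp only [Finset.mem_symmDiff, mem_sdiff, mem_union, mem_inter]
      tauto
    have h2 : (I ∩ J) ⊆ (I ∪ J) := inter_subset_left.trans subset_union_left
    rw [h1, Finset.card_sdiff_of_subset h2]
    have h3 : (I ∩ J).card ≤ (I ∪ J).card := Finset.card_le_card h2
    push_cast [Nat.cast_sub h3]
    linarith
  push_cast
  rw [hcompl, hsd, hm, hd]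
  linear_combination (-(b:ℤ)) * huni
end

section
/- Under the simple mosaic model, the correlation between Z_M(x) and Z_M(y) equals ψ_N(1 + 2p_{xy} - p_x - p_y), where ψ_N is the probability generating function of N. Precisely: E[Z_M(x)Z_M(y)] = Var(U)·ψ_N(1+2p_{xy}-p_x-p_y) + (EU)², E[Z_M(x)] = EU, and Var(Z_M(x)) = Var(U). -/
open MeasureTheory ProbabilityTheory Finset
open scoped Classical
open scoped ENNReal


lemma aux_meas {Ω ι : Type*} [MeasurableSpace Ω] [Countable ι] (g : Ω → ι) (f : ι → Ω → ℝ)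
    (hg : ∀ i, MeasurableSet {ω | g ω = i}) (hf : ∀ i, Measurable (f i)) :
    Measurable (fun ω => f (g ω) ω) := by
  intro s hs
  have h : (fun ω => f (g ω) ω) ⁻¹' s = ⋃ i, ({ω | g ω = i} ∩ f i ⁻¹' s) := by
    ext ω
    simp only [Set.mem_preimage, Set.mem_iUnion, Set.mem_inter_iff, Set.mem_setOf_eq]
    constructor
    · intro h; exact ⟨g ω, rfl, h⟩
    · rintro ⟨i, hi, h⟩; rw [hi]; exact h
  rw [h]
  exact MeasurableSet.iUnion fun i => (hg i).inter (hf i hs)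

lemma aux_key {Ω ι : Type*} [MeasurableSpace Ω] [Countable ι] (P : Measure Ω)
    [IsProbabilityMeasure P]
    (A : ι → Set Ω) (hA : ∀ i, MeasurableSet (A i))
    (hd : Pairwise (Function.onFun Disjoint A)) (hc : ⋃ i, A i = Set.univ)
    (f : ι → Ω → ℝ) (hfi : ∀ i, Integrable (f i) P)
    (hind : ∀ i, IndepFun ((A i).indicator (fun _ => (1:ℝ))) (f i) P)
    (L : ℝ≥0∞) (hL : L ≠ ⊤) (hbd : ∀ i, ∫⁻ ω, ‖f i ω‖₊ ∂P ≤ L)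
    (F : Ω → ℝ) (hFm : Measurable F) (hF : ∀ i, ∀ ω ∈ A i, F ω = f i ω) :
    Integrable F P ∧ ∫ ω, F ω ∂P = ∑' i, (P (A i)).toReal * ∫ ω, f i ω ∂P := by
  -- independence of ℝ≥0∞-valued indicator and nnnorm
  have hindE : ∀ i, IndepFun ((A i).indicator (fun _ => (1:ℝ≥0∞)))
      (fun ω => (‖f i ω‖₊ : ℝ≥0∞)) P := by
    intro i
    have h := (hind i).comp (φ := ENNReal.ofReal) (ψ := fun x : ℝ => (‖x‖₊ : ℝ≥0∞))
      ENNReal.measurable_ofReal (measurable_coe_nnreal_ennreal.comp measurable_nnnorm)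
    have heq : (ENNReal.ofReal ∘ (A i).indicator (fun _ => (1:ℝ)))
        = (A i).indicator (fun _ => (1:ℝ≥0∞)) := by
      funext ω; by_cases hω : ω ∈ A i <;> simp [hω]
    rwa [heq] at h
  have hsetl : ∀ i, ∫⁻ ω in A i, ‖f i ω‖₊ ∂P = P (A i) * ∫⁻ ω, ‖f i ω‖₊ ∂P := by
    intro i
    rw [← lintegral_indicator (hA i)]
    have h1 : ∀ ω, (A i).indicator (fun ω => (‖f i ω‖₊:ℝ≥0∞)) ω
        = (A i).indicator (fun _ => (1:ℝ≥0∞)) ω * ‖f i ω‖₊ := by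
      intro ω; by_cases hω : ω ∈ A i <;> simp [hω]
    calc ∫⁻ ω, (A i).indicator (fun ω => (‖f i ω‖₊:ℝ≥0∞)) ω ∂P
        = ∫⁻ ω, (A i).indicator (fun _ => (1:ℝ≥0∞)) ω * ‖f i ω‖₊ ∂P := lintegral_congr h1
      _ = (∫⁻ ω, (A i).indicator (fun _ => (1:ℝ≥0∞)) ω ∂P) * ∫⁻ ω, ‖f i ω‖₊ ∂P :=
          lintegral_mul_eq_lintegral_mul_lintegral_of_indepFun''
            ((measurable_const.indicator (hA i)).aemeasurable)
            ((measurable_coe_nnreal_ennreal.comp measurable_nnnorm).comp_aemeasurable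
              (hfi i).1.aemeasurable) (hindE i)
      _ = P (A i) * ∫⁻ ω, ‖f i ω‖₊ ∂P := by
          rw [show ((A i).indicator (fun _ => (1:ℝ≥0∞))) = (A i).indicator 1 from rfl,
            lintegral_indicator_one (hA i)]
  have hsum : ∑' i, P (A i) = 1 := by
    rw [← measure_iUnion hd hA, hc, measure_univ]
  have hFint : Integrable F P := by
    refine ⟨hFm.aestronglyMeasurable, ?_⟩
    rw [HasFiniteIntegral]
    show ∫⁻ ω, (‖F ω‖₊ : ℝ≥0∞) ∂P < ⊤
    have h1 : ∫⁻ ω, ‖F ω‖₊ ∂P = ∑' i, ∫⁻ ω in A i, ‖F ω‖₊ ∂P := by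
      rw [← setLIntegral_univ, ← hc, lintegral_iUnion hA hd]
    have h2 : ∀ i, ∫⁻ ω in A i, ‖F ω‖₊ ∂P = ∫⁻ ω in A i, ‖f i ω‖₊ ∂P := by
      intro i
      refine setLIntegral_congr_fun (hA i) (fun ω hω => ?_)
      rw [hF i ω hω]
    rw [h1]
    simp_rw [h2]
    calc ∑' i, ∫⁻ ω in A i, ‖f i ω‖₊ ∂P
        = ∑' i, P (A i) * ∫⁻ ω, ‖f i ω‖₊ ∂P := by simp_rw [hsetl]
      _ ≤ ∑' i, P (A i) * L := ENNReal.tsum_le_tsum fun i => mul_le_mul_right (hbd i) _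
      _ = (∑' i, P (A i)) * L := by rw [ENNReal.tsum_mul_right]
      _ = L := by rw [hsum, one_mul]
      _ < ⊤ := hL.lt_top
  refine ⟨hFint, ?_⟩
  have h3 : ∫ ω, F ω ∂P = ∑' i, ∫ ω in A i, F ω ∂P := by
    rw [← setIntegral_univ, ← hc, integral_iUnion hA hd (hc ▸ hFint.integrableOn)]
  rw [h3]
  congr 1
  funext i
  have h4 : ∫ ω in A i, F ω ∂P = ∫ ω in A i, f i ω ∂P :=
    setIntegral_congr_fun (hA i) fun ω hω => hF i ω hω
  have h5 : ∫ ω in A i, f i ω ∂P = ∫ ω, (A i).indicator (fun _ => (1:ℝ)) ω * f i ω ∂P := by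
    rw [← integral_indicator (hA i)]
    congr 1; funext ω; by_cases hω : ω ∈ A i <;> simp [hω]
  have h6 : ∫ ω, (A i).indicator (fun _ => (1:ℝ)) ω * f i ω ∂P
      = (∫ ω, (A i).indicator (fun _ => (1:ℝ)) ω ∂P) * ∫ ω, f i ω ∂P :=
    (hind i).integral_mul_eq_mul_integral ((integrable_const (1:ℝ)).indicator (hA i)).aestronglyMeasurable (hfi i).aestronglyMeasurable
  rw [h4, h5, h6, integral_indicator_const (1:ℝ) (hA i)]
  simp
  exact Or.inl rfl

lemma aux_mul_le_sq_add_sq (x y : ℝ≥0∞) : x * y ≤ x ^ 2 + y ^ 2 := by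
  rcases le_total x y with h | h
  · calc x * y ≤ y * y := mul_le_mul_left h y
      _ = y ^ 2 := (sq y).symm
      _ ≤ x ^ 2 + y ^ 2 := le_add_self
  · calc x * y ≤ x * x := mul_le_mul_right h x
      _ = x ^ 2 := (sq x).symm
      _ ≤ x ^ 2 + y ^ 2 := le_self_add

noncomputable def sigB {Ω : Type*} (msp : Unit ⊕ ℕ ⊕ Finset ℕ → MeasurableSpace Ω) :
    MeasurableSpace Ω :=
  ⨆ k ∈ {k : Unit ⊕ ℕ ⊕ Finset ℕ | ∀ I : Finset ℕ, k ≠ Sum.inr (Sum.inr I)}, msp k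

lemma sigB_le {Ω : Type*} {m0 : MeasurableSpace Ω} {msp : Unit ⊕ ℕ ⊕ Finset ℕ → MeasurableSpace Ω}
    (h : ∀ k, msp k ≤ m0) : sigB msp ≤ m0 :=
  iSup₂_le fun k _ => h k

lemma le_sigB {Ω : Type*} {msp : Unit ⊕ ℕ ⊕ Finset ℕ → MeasurableSpace Ω}
    {k : Unit ⊕ ℕ ⊕ Finset ℕ} (hk : ∀ I : Finset ℕ, k ≠ Sum.inr (Sum.inr I)) :
    msp k ≤ sigB msp :=
  le_biSup msp hk


/-- Simple mosaic random field `Z_M(x) = ∑_{I⊆{1,…,N}} U_I 1_{x∈C_I}`: the cells are built from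
i.i.d. random sets `B_i` (with `Ex i = {x ∈ B_i}`, `Ey i = {y ∈ B_i}`), the values `U_I` are
i.i.d. with mean `m` and second moment `m2` (`Var U = m2 - m² > 0`), `N` is `ℕ`-valued, not a.s.
`0`, and `N`, the `B_i` and the `U_I` are jointly independent.  Then `E[Z_M(x)] = EU`,
`E[Z_M(x)Z_M(y)] = Var(U)·ψ_N(1+2p_{xy}-p_x-p_y) + (EU)²`, and `Var(Z_M(x)) = Var(U)`;
hence the correlation of `Z_M(x)` and `Z_M(y)` is `ψ_N(1+2p_{xy}-p_x-p_y)`. -/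
theorem stmt8 {Ω : Type*} [MeasurableSpace Ω] (P : Measure Ω) [IsProbabilityMeasure P]
    (N : Ω → ℕ) (hN : Measurable N) (hN0 : P {ω | N ω = 0} < 1)
    (Ex Ey : ℕ → Set Ω) (hmx : ∀ i, MeasurableSet (Ex i)) (hmy : ∀ i, MeasurableSet (Ey i))
    (U : Finset ℕ → Ω → ℝ) (hU : ∀ I, Measurable (U I))
    (hUid : ∀ I J, Measure.map (U I) P = Measure.map (U J) P)
    (hUint : ∀ I, Integrable (fun ω => (U I ω) ^ 2) P)
    (m m2 : ℝ) (hm : ∀ I, ∫ ω, U I ω ∂P = m) (hm2 : ∀ I, ∫ ω, (U I ω) ^ 2 ∂P = m2)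
    (hvar : 0 < m2 - m ^ 2)
    (hind : iIndep
      (Sum.elim (fun _ : Unit => MeasurableSpace.comap N ⊤)
        (Sum.elim (fun i : ℕ => MeasurableSpace.generateFrom {Ex i, Ey i})
          (fun I : Finset ℕ => MeasurableSpace.comap (U I) (borel ℝ)))) P)
    (px py pxy : ℝ) (hpx0 : 0 < px) (hpy0 : 0 < py)
    (hpx : ∀ i, (P (Ex i)).toReal = px) (hpy : ∀ i, (P (Ey i)).toReal = py)
    (hpxy : ∀ i, (P (Ex i ∩ Ey i)).toReal = pxy) :
    let Z : (ℕ → Set Ω) → Ω → ℝ :=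
      fun E ω => U ((Finset.Icc 1 (N ω)).filter (fun i => ω ∈ E i)) ω
    let ψ : ℝ → ℝ := fun t => ∑' n : ℕ, (P {ω | N ω = n}).toReal * t ^ n
    (∫ ω, Z Ex ω ∂P = m) ∧
    (∫ ω, Z Ex ω * Z Ey ω ∂P =
      (m2 - m ^ 2) * ψ (1 + 2 * pxy - px - py) + m ^ 2) ∧
    (∫ ω, (Z Ex ω) ^ 2 ∂P - (∫ ω, Z Ex ω ∂P) ^ 2 = m2 - m ^ 2) := by
  intro Z ψ
  rw [show borel ℝ = (inferInstance : MeasurableSpace ℝ) from BorelSpace.measurable_eq.symm] at hind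
  set msp : Unit ⊕ ℕ ⊕ Finset ℕ → MeasurableSpace Ω :=
    Sum.elim (fun _ : Unit => MeasurableSpace.comap N ⊤)
        (Sum.elim (fun i : ℕ => MeasurableSpace.generateFrom {Ex i, Ey i})
          (fun I : Finset ℕ => MeasurableSpace.comap (U I) inferInstance)) with hmsp
  have hind' : iIndep msp P := hind
  have h_le : ∀ k, msp k ≤ (inferInstance : MeasurableSpace Ω) := by
    rintro (⟨⟩ | i | I)
    · rintro s ⟨t, -, rfl⟩; exact hN trivial
    · exact MeasurableSpace.generateFrom_le (by rintro t (rfl | rfl); exacts [hmx i, hmy i])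
    · exact (hU I).comap_le
  have hmemN : (Sum.inl () : Unit ⊕ ℕ ⊕ Finset ℕ) ∈
      {k : Unit ⊕ ℕ ⊕ Finset ℕ | ∀ I : Finset ℕ, k ≠ Sum.inr (Sum.inr I)} := by
    intro I h; cases h
  have hmemB : ∀ i : ℕ, (Sum.inr (Sum.inl i) : Unit ⊕ ℕ ⊕ Finset ℕ) ∈
      {k : Unit ⊕ ℕ ⊕ Finset ℕ | ∀ I : Finset ℕ, k ≠ Sum.inr (Sum.inr I)} := by
    intro i I h; cases h
  have hEx𝔅 : ∀ i, MeasurableSet[sigB msp] (Ex i) := fun i =>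
    (le_sigB (hmemB i)) _ (MeasurableSpace.measurableSet_generateFrom (by simp))
  have hEy𝔅 : ∀ i, MeasurableSet[sigB msp] (Ey i) := fun i =>
    (le_sigB (hmemB i)) _ (MeasurableSpace.measurableSet_generateFrom (by simp))
  have hNset𝔅 : ∀ n, MeasurableSet[sigB msp] {ω | N ω = n} := fun n =>
    (le_sigB hmemN) _ ⟨{n}, trivial, by ext ω; simp⟩
  have h𝔅le : ∀ s : Set Ω, MeasurableSet[sigB msp] s → MeasurableSet s :=
    fun s hs => sigB_le h_le s hs

  -- filter characterization
  have hfilt : ∀ (E : ℕ → Set Ω) (n : ℕ) (I : Finset ℕ),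
      {ω | (Icc 1 n).filter (fun i => ω ∈ E i) = I}
        = if I ⊆ Icc 1 n then
            ⋂ i, (if i ∈ Icc 1 n then (if i ∈ I then E i else (E i)ᶜ) else Set.univ)
          else ∅ := by
    intro E n I
    split_ifs with hsub
    · ext ω
      simp only [Set.mem_setOf_eq, Set.mem_iInter]
      constructor
      · intro h i
        split_ifs with h1 h2
        · rw [← h] at h2; exact (Finset.mem_filter.mp h2).2
        · intro hmem
          exact h2 (h ▸ Finset.mem_filter.mpr ⟨h1, hmem⟩)
        · trivial
      · intro h
        ext j
        simp only [Finset.mem_filter]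
        constructor
        · rintro ⟨hj1, hj2⟩
          have hj := h j
          rw [if_pos hj1] at hj
          by_contra hjI
          rw [if_neg hjI] at hj
          exact hj hj2
        · intro hjI
          refine ⟨hsub hjI, ?_⟩
          have hj := h j
          rw [if_pos (hsub hjI), if_pos hjI] at hj
          exact hj
    · ext ω
      simp only [Set.mem_setOf_eq, Set.mem_empty_iff_false, iff_false]
      intro h
      exact hsub (h ▸ Finset.filter_subset _ _)
  have hIxm : ∀ (E : ℕ → Set Ω), (∀ i, MeasurableSet[sigB msp] (E i)) → ∀ I : Finset ℕ,
      MeasurableSet[sigB msp] {ω | (Icc 1 (N ω)).filter (fun i => ω ∈ E i) = I} := by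
    intro E hE I
    have heq : {ω | (Icc 1 (N ω)).filter (fun i => ω ∈ E i) = I}
        = ⋃ n, ({ω | N ω = n} ∩ {ω | (Icc 1 n).filter (fun i => ω ∈ E i) = I}) := by
      ext ω
      simp only [Set.mem_setOf_eq, Set.mem_iUnion, Set.mem_inter_iff]
      constructor
      · intro h; exact ⟨N ω, rfl, h⟩
      · rintro ⟨n, hn, h⟩; rw [hn]; exact h
    rw [heq]
    refine MeasurableSet.iUnion fun n => (hNset𝔅 n).inter ?_
    rw [hfilt E n I]
    split_ifs
    · refine MeasurableSet.iInter fun i => ?_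
      split_ifs with h1 h2
      · exact hE i
      · exact (hE i).compl
      · exact @MeasurableSet.univ _ (sigB msp)
    · exact @MeasurableSet.empty _ (sigB msp)
  -- independence infrastructure
  have hdisjT : ∀ T : Set (Unit ⊕ ℕ ⊕ Finset ℕ), (∀ k ∈ T, ∃ I : Finset ℕ, k = Sum.inr (Sum.inr I)) →
      Disjoint {k : Unit ⊕ ℕ ⊕ Finset ℕ | ∀ I : Finset ℕ, k ≠ Sum.inr (Sum.inr I)} T := by
    intro T hT
    rw [Set.disjoint_left]
    intro k hk hkT
    obtain ⟨I, rfl⟩ := hT k hkT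
    exact hk I rfl
  have hIndepSingle : ∀ K : Finset ℕ, Indep (sigB msp) (msp (Sum.inr (Sum.inr K))) P := by
    intro K
    have h := indep_iSup_of_disjoint (μ := P) h_le hind'
      (S := {k : Unit ⊕ ℕ ⊕ Finset ℕ | ∀ I : Finset ℕ, k ≠ Sum.inr (Sum.inr I)})
      (T := {Sum.inr (Sum.inr K)}) (hdisjT _ (by rintro k rfl; exact ⟨K, rfl⟩))
    simpa [sigB] using h
  have hIndepPair : ∀ I J : Finset ℕ,
      Indep (sigB msp) (msp (Sum.inr (Sum.inr I)) ⊔ msp (Sum.inr (Sum.inr J))) P := by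
    intro I J
    have h := indep_iSup_of_disjoint (μ := P) h_le hind'
      (S := {k : Unit ⊕ ℕ ⊕ Finset ℕ | ∀ I : Finset ℕ, k ≠ Sum.inr (Sum.inr I)})
      (T := {Sum.inr (Sum.inr I), Sum.inr (Sum.inr J)})
      (hdisjT _ (by rintro k (rfl | rfl); exacts [⟨I, rfl⟩, ⟨J, rfl⟩]))
    rw [iSup_pair] at h
    simpa [sigB] using h
  have hIndFun : ∀ (A : Set Ω), MeasurableSet[sigB msp] A → ∀ (g : Ω → ℝ) (mg : MeasurableSpace Ω),
      Indep (sigB msp) mg P → Measurable[mg] g →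
      IndepFun (A.indicator (fun _ => (1:ℝ))) g P := by
    intro A hA g mg hig hg
    rw [IndepFun_iff_Indep]
    refine indep_of_indep_of_le_left (indep_of_indep_of_le_right hig hg.comap_le) ?_
    exact Measurable.comap_le ((measurable_const : Measurable[sigB msp] _).indicator hA)
  have hUown : ∀ K : Finset ℕ, Measurable[msp (Sum.inr (Sum.inr K))] (U K) :=
    fun K => Measurable.of_comap_le le_rfl
  have hUIJ : ∀ I J : Finset ℕ, I ≠ J → IndepFun (U I) (U J) P := by
    intro I J hIJ
    rw [IndepFun_iff_Indep]
    exact hind'.indep (i := Sum.inr (Sum.inr I)) (j := Sum.inr (Sum.inr J)) (by simp [hIJ])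

  -- integrability
  have hL2mem : ∀ K : Finset ℕ, MemLp (U K) 2 P := fun K =>
    (memLp_two_iff_integrable_sq (hU K).aestronglyMeasurable).mpr (hUint K)
  have hInt1 : ∀ K : Finset ℕ, Integrable (U K) P := fun K => (hL2mem K).integrable one_le_two
  have hLnorm : ∀ (φ : ℝ → ℝ≥0∞), Measurable φ → ∀ I J : Finset ℕ,
      ∫⁻ ω, φ (U I ω) ∂P = ∫⁻ ω, φ (U J ω) ∂P := by
    intro φ hφ I J
    rw [← lintegral_map hφ (hU I), ← lintegral_map hφ (hU J), hUid I J]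
  have hL1 : ∀ K : Finset ℕ, ∫⁻ ω, (‖U K ω‖₊ : ℝ≥0∞) ∂P = ∫⁻ ω, (‖U ∅ ω‖₊ : ℝ≥0∞) ∂P :=
    fun K => hLnorm (fun x => (‖x‖₊ : ℝ≥0∞))
      (measurable_coe_nnreal_ennreal.comp measurable_nnnorm) K ∅
  have hL1ne : ∫⁻ ω, (‖U ∅ ω‖₊ : ℝ≥0∞) ∂P ≠ ⊤ := (hInt1 ∅).2.ne
  have hL2 : ∀ K : Finset ℕ, ∫⁻ ω, (‖(U K ω) ^ 2‖₊ : ℝ≥0∞) ∂P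
      = ∫⁻ ω, (‖(U ∅ ω) ^ 2‖₊ : ℝ≥0∞) ∂P :=
    fun K => hLnorm (fun x => (‖x ^ 2‖₊ : ℝ≥0∞))
      (measurable_coe_nnreal_ennreal.comp ((measurable_id.pow_const 2).nnnorm)) K ∅
  have hL2ne : ∫⁻ ω, (‖(U ∅ ω) ^ 2‖₊ : ℝ≥0∞) ∂P ≠ ⊤ := (hUint ∅).2.ne
  -- partitions
  set Ix : Ω → Finset ℕ := fun ω => (Icc 1 (N ω)).filter (fun i => ω ∈ Ex i) with hIxdef
  set Iy : Ω → Finset ℕ := fun ω => (Icc 1 (N ω)).filter (fun i => ω ∈ Ey i) with hIydef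
  have hA1m𝔅 : ∀ I : Finset ℕ, MeasurableSet[sigB msp] {ω | Ix ω = I} := fun I => hIxm Ex hEx𝔅 I
  have hB1m𝔅 : ∀ J : Finset ℕ, MeasurableSet[sigB msp] {ω | Iy ω = J} := fun J => hIxm Ey hEy𝔅 J
  have hA1m : ∀ I : Finset ℕ, MeasurableSet {ω | Ix ω = I} := fun I => h𝔅le _ (hA1m𝔅 I)
  have hB1m : ∀ J : Finset ℕ, MeasurableSet {ω | Iy ω = J} := fun J => h𝔅le _ (hB1m𝔅 J)
  have hA1d : Pairwise (Function.onFun Disjoint (fun I : Finset ℕ => {ω | Ix ω = I})) := by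
    intro I J hIJ
    rw [Function.onFun, Set.disjoint_left]
    intro ω h1 h2
    exact hIJ ((h1 : Ix ω = I) ▸ (h2 : Ix ω = J))
  have hA1c : ⋃ I : Finset ℕ, {ω | Ix ω = I} = Set.univ := by
    ext ω; simp only [Set.mem_iUnion, Set.mem_setOf_eq, Set.mem_univ, iff_true]
    exact ⟨Ix ω, rfl⟩
  have hZxMeas : Measurable (fun ω => U (Ix ω) ω) := aux_meas Ix U hA1m hU
  have hZyMeas : Measurable (fun ω => U (Iy ω) ω) := aux_meas Iy U hB1m hU
  -- first application : E[Z_x] = m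
  obtain ⟨hZxInt, hZxVal⟩ := aux_key P (fun I : Finset ℕ => {ω | Ix ω = I}) hA1m hA1d hA1c
    U hInt1
    (fun I => hIndFun _ (hA1m𝔅 I) (U I) _ (hIndepSingle I) (hUown I))
    _ hL1ne (fun I => (hL1 I).le)
    (fun ω => U (Ix ω) ω) hZxMeas (fun I ω hω => by show U (Ix ω) ω = U I ω; rw [show Ix ω = I from hω])
  have hsum1 : ∑' I : Finset ℕ, (P {ω | Ix ω = I}).toReal = 1 := by
    rw [← ENNReal.tsum_toReal_eq (fun I => measure_ne_top P _), ← measure_iUnion hA1d hA1m,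
      hA1c, measure_univ, ENNReal.toReal_one]
  have hZxm : ∫ ω, U (Ix ω) ω ∂P = m := by
    rw [hZxVal]
    simp_rw [hm]
    rw [tsum_mul_right, hsum1, one_mul]
  -- second application : E[Z_x ^ 2] = m2
  obtain ⟨hZx2Int, hZx2Val⟩ := aux_key P (fun I : Finset ℕ => {ω | Ix ω = I}) hA1m hA1d hA1c
    (fun I ω => (U I ω) ^ 2) hUint
    (fun I => hIndFun _ (hA1m𝔅 I) _ _ (hIndepSingle I) ((hUown I).pow_const 2))
    _ hL2ne (fun I => (hL2 I).le)
    (fun ω => (U (Ix ω) ω) ^ 2) (hZxMeas.pow_const 2)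
    (fun I ω hω => by show (U (Ix ω) ω) ^ 2 = (U I ω) ^ 2; rw [show Ix ω = I from hω])
  have hZxm2 : ∫ ω, (U (Ix ω) ω) ^ 2 ∂P = m2 := by
    rw [hZx2Val]
    simp_rw [hm2]
    rw [tsum_mul_right, hsum1, one_mul]

  -- the event probability t
  set t : ℝ := 1 + 2 * pxy - px - py with htdef
  set Di : ℕ → Set Ω := fun i => (Ex i ∩ Ey i) ∪ ((Ex i)ᶜ ∩ (Ey i)ᶜ) with hDidef
  have hDitoReal : ∀ i, (P (Di i)).toReal = t := by
    intro i
    have hu : (P (Ex i ∪ Ey i)).toReal = px + py - pxy := by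
      have h0 := measure_union_add_inter (μ := P) (Ex i) (hmy i)
      have h2 := congrArg ENNReal.toReal h0
      rw [ENNReal.toReal_add (measure_ne_top P _) (measure_ne_top P _),
        ENNReal.toReal_add (measure_ne_top P _) (measure_ne_top P _), hpxy i, hpx i, hpy i] at h2
      linarith
    have hcompl : (P ((Ex i ∪ Ey i)ᶜ)).toReal = 1 - (px + py - pxy) := by
      rw [measure_compl ((hmx i).union (hmy i)) (measure_ne_top P _), measure_univ,
        ENNReal.toReal_sub_of_le prob_le_one ENNReal.one_ne_top, ENNReal.toReal_one, hu]
    have hdisj : Disjoint (Ex i ∩ Ey i) ((Ex i)ᶜ ∩ (Ey i)ᶜ) := by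
      rw [Set.disjoint_left]
      rintro ω ⟨h1, -⟩ ⟨h3, -⟩
      exact h3 h1
    rw [hDidef]
    simp only
    rw [measure_union hdisj ((hmx i).compl.inter (hmy i).compl),
      ENNReal.toReal_add (measure_ne_top P _) (measure_ne_top P _), hpxy i,
      show (Ex i)ᶜ ∩ (Ey i)ᶜ = (Ex i ∪ Ey i)ᶜ from (Set.compl_union _ _).symm, hcompl, htdef]
    ring
  have ht0 : (0:ℝ) ≤ t := by rw [← hDitoReal 0]; exact ENNReal.toReal_nonneg
  have hDival : ∀ i, P (Di i) = ENNReal.ofReal t := by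
    intro i
    rw [← ENNReal.ofReal_toReal (measure_ne_top P (Di i)), hDitoReal i]
  have hDim : ∀ i, MeasurableSet (Di i) :=
    fun i => ((hmx i).inter (hmy i)).union ((hmx i).compl.inter (hmy i).compl)
  -- measure of the event {N = n, B-events agree on Icc 1 n}
  have hWn : ∀ n : ℕ, P ({ω | N ω = n} ∩ ⋂ i, (if i ∈ Icc 1 n then Di i else Set.univ))
      = P {ω | N ω = n} * ENNReal.ofReal t ^ n := by
    intro n
    classical
    set sfun : Unit ⊕ ℕ ⊕ Finset ℕ → Set Ω :=
      Sum.elim (fun _ => {ω | N ω = n}) (Sum.elim Di (fun _ => Set.univ)) with hsfun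
    set S : Finset (Unit ⊕ ℕ ⊕ Finset ℕ) :=
      insert (Sum.inl ()) ((Icc 1 n).image (fun i => Sum.inr (Sum.inl i))) with hS
    have hinter : ⋂ k ∈ S, sfun k
        = {ω | N ω = n} ∩ ⋂ i, (if i ∈ Icc 1 n then Di i else Set.univ) := by
      ext ω
      simp only [hS, Set.mem_iInter, Finset.mem_insert, Finset.mem_image, Set.mem_inter_iff,
        Set.mem_setOf_eq]
      constructor
      · intro h
        refine ⟨h _ (Or.inl rfl), fun i => ?_⟩
        split_ifs with hi
        · exact h _ (Or.inr ⟨i, hi, rfl⟩)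
        · trivial
      · rintro ⟨h1, h2⟩ k hk
        rcases hk with rfl | ⟨i, hi, rfl⟩
        · exact h1
        · have hh := h2 i
          rw [if_pos hi] at hh
          exact hh
    have hmeas : ∀ k ∈ S, MeasurableSet[msp k] (sfun k) := by
      intro k hk
      rw [hS] at hk
      rcases Finset.mem_insert.mp hk with rfl | hk
      · exact ⟨{n}, trivial, by ext ω; simp [hsfun]⟩
      · obtain ⟨i, hi, rfl⟩ := Finset.mem_image.mp hk
        have hgx : MeasurableSet[MeasurableSpace.generateFrom {Ex i, Ey i}] (Ex i) :=
          MeasurableSpace.measurableSet_generateFrom (by simp)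
        have hgy : MeasurableSet[MeasurableSpace.generateFrom {Ex i, Ey i}] (Ey i) :=
          MeasurableSpace.measurableSet_generateFrom (by simp)
        exact (hgx.inter hgy).union (hgx.compl.inter hgy.compl)
    have hprod := hind'.meas_biInter (S := S) (s := sfun) hmeas
    have hnotmem : (Sum.inl () : Unit ⊕ ℕ ⊕ Finset ℕ)
        ∉ (Icc 1 n).image (fun i => Sum.inr (Sum.inl i)) := by simp
    calc P ({ω | N ω = n} ∩ ⋂ i, (if i ∈ Icc 1 n then Di i else Set.univ))
        = P (⋂ k ∈ S, sfun k) := by rw [hinter]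
      _ = ∏ k ∈ S, P (sfun k) := hprod
      _ = P {ω | N ω = n} * ∏ i ∈ Icc 1 n, P (Di i) := by
          rw [hS, Finset.prod_insert hnotmem, Finset.prod_image
            (by intro a _ b _ h; simpa using h)]
          rfl
      _ = P {ω | N ω = n} * ENNReal.ofReal t ^ n := by
          rw [Finset.prod_congr rfl fun i _ => hDival i, Finset.prod_const, Nat.card_Icc]
          simp

  -- diagonal set equality
  have hdiagset : (⋃ I : Finset ℕ, ({ω | Ix ω = I} ∩ {ω | Iy ω = I}))
      = ⋃ n : ℕ, ({ω | N ω = n} ∩ ⋂ i, (if i ∈ Icc 1 n then Di i else Set.univ)) := by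
    ext ω
    simp only [Set.mem_iUnion, Set.mem_inter_iff, Set.mem_setOf_eq, Set.mem_iInter]
    constructor
    · rintro ⟨I, h1, h2⟩
      have hxy : Ix ω = Iy ω := h1.trans h2.symm
      have hkey : ∀ i, i ∈ Icc 1 (N ω) → (ω ∈ Ex i ↔ ω ∈ Ey i) := by
        intro i hi
        constructor
        · intro hex
          have : i ∈ Ix ω := by
            simp only [hIxdef, Finset.mem_filter]
            exact ⟨hi, hex⟩
          rw [hxy] at this
          simp only [hIydef, Finset.mem_filter] at this
          exact this.2
        · intro hey
          have : i ∈ Iy ω := by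
            simp only [hIydef, Finset.mem_filter]
            exact ⟨hi, hey⟩
          rw [← hxy] at this
          simp only [hIxdef, Finset.mem_filter] at this
          exact this.2
      refine ⟨N ω, rfl, fun i => ?_⟩
      split_ifs with hi
      · by_cases hex : ω ∈ Ex i
        · exact Or.inl ⟨hex, (hkey i hi).1 hex⟩
        · exact Or.inr ⟨hex, fun hey => hex ((hkey i hi).2 hey)⟩
      · trivial
    · rintro ⟨n, hn, h⟩
      refine ⟨Ix ω, rfl, ?_⟩
      show Iy ω = Ix ω
      ext j
      simp only [hIxdef, hIydef, Finset.mem_filter]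
      constructor
      · rintro ⟨hj, hmem⟩
        refine ⟨hj, ?_⟩
        have hj' : j ∈ Icc 1 n := by rw [← hn]; exact hj
        have hDj := h j
        rw [if_pos hj'] at hDj
        rcases hDj with ⟨ha, -⟩ | ⟨-, hb⟩
        · exact ha
        · exact absurd hmem hb
      · rintro ⟨hj, hmem⟩
        refine ⟨hj, ?_⟩
        have hj' : j ∈ Icc 1 n := by rw [← hn]; exact hj
        have hDj := h j
        rw [if_pos hj'] at hDj
        rcases hDj with ⟨-, ha⟩ | ⟨hb, -⟩
        · exact ha
        · exact absurd hmem hb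
  -- measure of the diagonal
  have hWm : ∀ n : ℕ, MeasurableSet ({ω | N ω = n} ∩ ⋂ i, (if i ∈ Icc 1 n then Di i else Set.univ)) := by
    intro n
    refine (hN (show MeasurableSet {n} from trivial)).inter
      (MeasurableSet.iInter fun i => ?_)
    split_ifs
    · exact hDim i
    · exact MeasurableSet.univ
  have hWd : Pairwise (Function.onFun Disjoint
      (fun n : ℕ => {ω | N ω = n} ∩ ⋂ i, (if i ∈ Icc 1 n then Di i else Set.univ))) := by
    intro a b hab
    rw [Function.onFun, Set.disjoint_left]
    rintro ω ⟨h1, -⟩ ⟨h2, -⟩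
    exact hab ((h1 : N ω = a) ▸ (h2 : N ω = b))
  have hdiagd : Pairwise (Function.onFun Disjoint
      (fun I : Finset ℕ => {ω | Ix ω = I} ∩ {ω | Iy ω = I})) := by
    intro I J hIJ
    exact ((hA1d hIJ).mono Set.inter_subset_left Set.inter_subset_left)
  have hdiagm : ∀ I : Finset ℕ, MeasurableSet ({ω | Ix ω = I} ∩ {ω | Iy ω = I}) :=
    fun I => (hA1m I).inter (hB1m I)
  have hq : ∑' I : Finset ℕ, (P ({ω | Ix ω = I} ∩ {ω | Iy ω = I})).toReal
      = ∑' n : ℕ, (P {ω | N ω = n}).toReal * t ^ n := by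
    rw [← ENNReal.tsum_toReal_eq (fun _ => measure_ne_top P _), ← measure_iUnion hdiagd hdiagm,
      hdiagset, measure_iUnion hWd hWm, ENNReal.tsum_toReal_eq (fun _ => measure_ne_top P _)]
    refine tsum_congr fun n => ?_
    rw [hWn n, ENNReal.toReal_mul, ENNReal.toReal_pow, ENNReal.toReal_ofReal ht0]

  -- pair partition
  set A2 : Finset ℕ × Finset ℕ → Set Ω := fun p => {ω | Ix ω = p.1} ∩ {ω | Iy ω = p.2}
    with hA2def
  have hA2m𝔅 : ∀ p, MeasurableSet[sigB msp] (A2 p) := fun p => (hA1m𝔅 p.1).inter (hB1m𝔅 p.2)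
  have hA2m : ∀ p, MeasurableSet (A2 p) := fun p => h𝔅le _ (hA2m𝔅 p)
  have hA2d : Pairwise (Function.onFun Disjoint A2) := by
    intro p q hpq
    rw [Function.onFun, Set.disjoint_left]
    rintro ω ⟨h1, h2⟩ ⟨h3, h4⟩
    exact hpq (Prod.ext_iff.mpr ⟨(h1 : Ix ω = p.1).symm.trans h3, (h2 : Iy ω = p.2).symm.trans h4⟩)
  have hA2c : ⋃ p, A2 p = Set.univ := by
    ext ω
    simp only [hA2def, Set.mem_iUnion, Set.mem_inter_iff, Set.mem_setOf_eq, Set.mem_univ, iff_true]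
    exact ⟨(Ix ω, Iy ω), rfl, rfl⟩
  have hfi3 : ∀ p : Finset ℕ × Finset ℕ, Integrable (fun ω => U p.1 ω * U p.2 ω) P := by
    intro p
    by_cases h : p.1 = p.2
    · rw [← h]
      have := hUint p.1
      simpa [pow_two] using this
    · exact (hUIJ _ _ h).integrable_mul (hInt1 _) (hInt1 _)
  have hbd3 : ∀ p : Finset ℕ × Finset ℕ, ∫⁻ ω, (‖U p.1 ω * U p.2 ω‖₊ : ℝ≥0∞) ∂P
      ≤ (∫⁻ ω, (‖(U ∅ ω) ^ 2‖₊ : ℝ≥0∞) ∂P) + ∫⁻ ω, (‖(U ∅ ω) ^ 2‖₊ : ℝ≥0∞) ∂P := by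
    intro p
    have hmeas1 : Measurable (fun ω => ((‖(U p.1 ω)‖₊ : ℝ≥0∞)) ^ 2) :=
      ((measurable_coe_nnreal_ennreal.comp (hU p.1).nnnorm).pow_const 2)
    calc ∫⁻ ω, (‖U p.1 ω * U p.2 ω‖₊ : ℝ≥0∞) ∂P
        = ∫⁻ ω, ((‖U p.1 ω‖₊ : ℝ≥0∞) * (‖U p.2 ω‖₊ : ℝ≥0∞)) ∂P := by
          refine lintegral_congr fun ω => ?_
          rw [nnnorm_mul, ENNReal.coe_mul]
      _ ≤ ∫⁻ ω, ((‖U p.1 ω‖₊ : ℝ≥0∞) ^ 2 + (‖U p.2 ω‖₊ : ℝ≥0∞) ^ 2) ∂P :=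
          lintegral_mono fun ω => aux_mul_le_sq_add_sq _ _
      _ = (∫⁻ ω, (‖U p.1 ω‖₊ : ℝ≥0∞) ^ 2 ∂P) + ∫⁻ ω, (‖U p.2 ω‖₊ : ℝ≥0∞) ^ 2 ∂P :=
          lintegral_add_left hmeas1 _
      _ = (∫⁻ ω, (‖(U ∅ ω) ^ 2‖₊ : ℝ≥0∞) ∂P) + ∫⁻ ω, (‖(U ∅ ω) ^ 2‖₊ : ℝ≥0∞) ∂P := by
          have hcoe : ∀ (K : Finset ℕ) (ω : Ω), ((‖U K ω‖₊ : ℝ≥0∞)) ^ 2 = (‖(U K ω) ^ 2‖₊ : ℝ≥0∞) := by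
            intro K ω
            rw [nnnorm_pow, ENNReal.coe_pow]
          rw [lintegral_congr (hcoe p.1), lintegral_congr (hcoe p.2), hL2 p.1, hL2 p.2]
  have hbd3ne : ((∫⁻ ω, (‖(U ∅ ω) ^ 2‖₊ : ℝ≥0∞) ∂P) + ∫⁻ ω, (‖(U ∅ ω) ^ 2‖₊ : ℝ≥0∞) ∂P) ≠ ⊤ :=
    ENNReal.add_ne_top.mpr ⟨hL2ne, hL2ne⟩
  have hind3 : ∀ p : Finset ℕ × Finset ℕ,
      IndepFun ((A2 p).indicator (fun _ => (1:ℝ))) (fun ω => U p.1 ω * U p.2 ω) P := by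
    intro p
    have hg1 : Measurable[msp (Sum.inr (Sum.inr p.1)) ⊔ msp (Sum.inr (Sum.inr p.2))] (U p.1) :=
      Measurable.of_comap_le (le_trans le_rfl le_sup_left)
    have hg2 : Measurable[msp (Sum.inr (Sum.inr p.1)) ⊔ msp (Sum.inr (Sum.inr p.2))] (U p.2) :=
      Measurable.of_comap_le (le_trans le_rfl le_sup_right)
    exact hIndFun _ (hA2m𝔅 p) _ _ (hIndepPair p.1 p.2) (hg1.mul hg2)
  obtain ⟨hZxyInt, hZxyVal⟩ := aux_key P A2 hA2m hA2d hA2c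
    (fun p ω => U p.1 ω * U p.2 ω) hfi3 hind3
    _ hbd3ne hbd3
    (fun ω => U (Ix ω) ω * U (Iy ω) ω) (hZxMeas.mul hZyMeas)
    (fun p ω hω => by
      show U (Ix ω) ω * U (Iy ω) ω = U p.1 ω * U p.2 ω
      rw [show Ix ω = p.1 from hω.1, show Iy ω = p.2 from hω.2])
  have hf3val : ∀ p : Finset ℕ × Finset ℕ,
      ∫ ω, U p.1 ω * U p.2 ω ∂P = if p.1 = p.2 then m2 else m ^ 2 := by
    intro p
    split_ifs with h
    · rw [← h]
      calc ∫ ω, U p.1 ω * U p.1 ω ∂P = ∫ ω, (U p.1 ω) ^ 2 ∂P := by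
            refine integral_congr_ae (Filter.Eventually.of_forall fun ω => ?_)
            show U p.1 ω * U p.1 ω = U p.1 ω ^ 2
            rw [pow_two]
        _ = m2 := hm2 p.1
    · calc ∫ ω, U p.1 ω * U p.2 ω ∂P
          = (∫ ω, U p.1 ω ∂P) * ∫ ω, U p.2 ω ∂P :=
            (hUIJ p.1 p.2 h).integral_mul_eq_mul_integral (hInt1 p.1).aestronglyMeasurable (hInt1 p.2).aestronglyMeasurable
        _ = m ^ 2 := by rw [hm p.1, hm p.2, pow_two]
  -- summations over pairs
  have hsumgS : Summable (fun p : Finset ℕ × Finset ℕ => (P (A2 p)).toReal) := by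
    refine ENNReal.summable_toReal ?_
    rw [← measure_iUnion hA2d hA2m, hA2c, measure_univ]
    exact ENNReal.one_ne_top
  have htotal : ∑' p : Finset ℕ × Finset ℕ, (P (A2 p)).toReal = 1 := by
    rw [← ENNReal.tsum_toReal_eq (fun _ => measure_ne_top P _), ← measure_iUnion hA2d hA2m,
      hA2c, measure_univ, ENNReal.toReal_one]
  have hdiagtsum : ∀ c : ℝ, ∑' p : Finset ℕ × Finset ℕ,
      (if p.1 = p.2 then (P (A2 p)).toReal * c else 0)
      = ∑' I : Finset ℕ, (P (A2 (I, I))).toReal * c := by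
    intro c
    have hinj : Function.Injective (fun I : Finset ℕ => (I, I)) :=
      fun a b h => (Prod.ext_iff.mp h).1
    have hsupp : Function.support (fun p : Finset ℕ × Finset ℕ =>
        if p.1 = p.2 then (P (A2 p)).toReal * c else 0)
        ⊆ Set.range (fun I : Finset ℕ => (I, I)) := by
      intro p hp
      simp only [Function.mem_support] at hp
      by_cases h : p.1 = p.2
      · exact ⟨p.1, by rw [Prod.ext_iff]; exact ⟨rfl, h⟩⟩
      · simp [h] at hp
    have h1 := Function.Injective.tsum_eq (f := fun p : Finset ℕ × Finset ℕ =>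
      if p.1 = p.2 then (P (A2 p)).toReal * c else 0) hinj hsupp
    rw [← h1]
    simp
  have hs2 : Summable (fun p : Finset ℕ × Finset ℕ =>
      if p.1 = p.2 then (P (A2 p)).toReal * (m2 - m ^ 2) else 0) := by
    refine Summable.of_nonneg_of_le (fun p => ?_) (fun p => ?_) (hsumgS.mul_right (m2 - m ^ 2))
    · split_ifs
      · exact mul_nonneg ENNReal.toReal_nonneg hvar.le
      · exact le_rfl
    · split_ifs
      · exact le_rfl
      · exact mul_nonneg ENNReal.toReal_nonneg hvar.le
  have hterm : ∀ p : Finset ℕ × Finset ℕ,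
      (P (A2 p)).toReal * (if p.1 = p.2 then m2 else m ^ 2)
      = (P (A2 p)).toReal * m ^ 2 + (if p.1 = p.2 then (P (A2 p)).toReal * (m2 - m ^ 2) else 0) := by
    intro p
    split_ifs <;> ring
  have hsecond : ∫ ω, U (Ix ω) ω * U (Iy ω) ω ∂P
      = (m2 - m ^ 2) * (∑' n : ℕ, (P {ω | N ω = n}).toReal * t ^ n) + m ^ 2 := by
    rw [hZxyVal]
    calc ∑' p : Finset ℕ × Finset ℕ, (P (A2 p)).toReal * ∫ ω, U p.1 ω * U p.2 ω ∂P
        = ∑' p : Finset ℕ × Finset ℕ, ((P (A2 p)).toReal * m ^ 2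
            + (if p.1 = p.2 then (P (A2 p)).toReal * (m2 - m ^ 2) else 0)) := by
          refine tsum_congr fun p => ?_
          rw [hf3val p, hterm p]
      _ = (∑' p : Finset ℕ × Finset ℕ, (P (A2 p)).toReal * m ^ 2)
            + ∑' p : Finset ℕ × Finset ℕ, (if p.1 = p.2 then (P (A2 p)).toReal * (m2 - m ^ 2) else 0) :=
          Summable.tsum_add (hsumgS.mul_right _) hs2
      _ = m ^ 2 + (∑' I : Finset ℕ, (P (A2 (I, I))).toReal) * (m2 - m ^ 2) := by
          rw [tsum_mul_right, htotal, one_mul, hdiagtsum (m2 - m ^ 2), tsum_mul_right]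
      _ = (m2 - m ^ 2) * (∑' n : ℕ, (P {ω | N ω = n}).toReal * t ^ n) + m ^ 2 := by
          rw [show (∑' I : Finset ℕ, (P (A2 (I, I))).toReal)
              = ∑' n : ℕ, (P {ω | N ω = n}).toReal * t ^ n from hq]
          ring
  refine ⟨hZxm, hsecond, ?_⟩
  show (∫ ω, (U (Ix ω) ω) ^ 2 ∂P) - (∫ ω, U (Ix ω) ω ∂P) ^ 2 = m2 - m ^ 2
  rw [hZxm2, hZxm]
end

section
/- Under the random token model, E[Z_{RT}(x)] = EU·EN·p_x and Cov(Z_{RT}(x), Z_{RT}(y)) = E[U²]·EN·p_{xy} + (EU)²·(Var N - EN)·p_x·p_y. Consequently the correlation is (a·p_{xy} + b·p_x·p_y)/√((a + b·p_x)(a + b·p_y)·p_x·p_y) with a = E[U²]·EN and b = (EU)²·(Var N - EN). -/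
open MeasureTheory ProbabilityTheory Finset
open scoped Classical

set_option maxHeartbeats 1000000

theorem RT_aux {Ω : Type*} [mΩ : MeasurableSpace Ω] (P : Measure Ω) [IsProbabilityMeasure P]
    (N : Ω → ℕ) (hN : Measurable N) (hN2 : Integrable (fun ω => ((N ω : ℝ)) ^ 2) P)
    (en en2 : ℝ) (hen : ∫ ω, (N ω : ℝ) ∂P = en) (hen2 : ∫ ω, ((N ω : ℝ)) ^ 2 ∂P = en2)
    (Ex Ey : ℕ → Set Ω) (hmx : ∀ i, MeasurableSet (Ex i)) (hmy : ∀ i, MeasurableSet (Ey i))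
    (U : ℕ → Ω → ℝ) (hU : ∀ i, Measurable (U i))
    (hUid : ∀ i j, Measure.map (U i) P = Measure.map (U j) P)
    (hUint : ∀ i, Integrable (fun ω => (U i ω) ^ 2) P)
    (m m2 : ℝ) (hm : ∀ i, ∫ ω, U i ω ∂P = m) (hm2 : ∀ i, ∫ ω, (U i ω) ^ 2 ∂P = m2)
    (hind : iIndep (Sum.elim (fun _ : Unit => MeasurableSpace.comap N ⊤)
        (Sum.elim (fun i : ℕ => MeasurableSpace.generateFrom {Ex i, Ey i})
          (fun i : ℕ => MeasurableSpace.comap (U i) (borel ℝ)))) P)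
    (px py pxy : ℝ)
    (hpx : ∀ i, (P (Ex i)).toReal = px) (hpy : ∀ i, (P (Ey i)).toReal = py)
    (hpxy : ∀ i, (P (Ex i ∩ Ey i)).toReal = pxy) :
    (∫ ω, (∑ i ∈ Finset.Icc 1 (N ω), if ω ∈ Ex i then U i ω else 0) ∂P = m * en * px) ∧
    (∫ ω, (∑ i ∈ Finset.Icc 1 (N ω), if ω ∈ Ex i then U i ω else 0) *
        (∑ j ∈ Finset.Icc 1 (N ω), if ω ∈ Ey j then U j ω else 0) ∂P
      = m2 * en * pxy + m ^ 2 * (en2 - en) * px * py) := by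
  set M : Unit ⊕ ℕ ⊕ ℕ → MeasurableSpace Ω := (Sum.elim (fun _ : Unit => MeasurableSpace.comap N ⊤)
        (Sum.elim (fun i : ℕ => MeasurableSpace.generateFrom {Ex i, Ey i})
          (fun i : ℕ => MeasurableSpace.comap (U i) (borel ℝ)))) with hMdef
  have h_le : ∀ k, M k ≤ mΩ := by
    rintro ((_) | (i | i))
    · rintro s ⟨s', -, rfl⟩
      exact hN (MeasurableSet.of_discrete)
    · refine MeasurableSpace.generateFrom_le ?_
      rintro t ht
      simp only [Set.mem_insert_iff, Set.mem_singleton_iff] at ht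
      rcases ht with rfl | rfl
      · exact hmx i
      · exact hmy i
    · rintro s ⟨s', hs', rfl⟩
      exact hU i (by rw [BorelSpace.measurable_eq (α := ℝ)]; exact hs')
  have hpair : ∀ {s t : Set (Unit ⊕ ℕ ⊕ ℕ)}, Disjoint s t → ∀ {f g : Ω → ℝ},
      Measurable[⨆ k ∈ s, M k] f → Measurable[⨆ k ∈ t, M k] g → IndepFun f g P := by
    intro s t hst f g hf hg
    have h := indep_iSup_of_disjoint h_le hind hst
    exact indep_of_indep_of_le_right (indep_of_indep_of_le_left h
      (measurable_iff_comap_le.mp hf)) (measurable_iff_comap_le.mp hg)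
  have hle2 : ∀ (k : Unit ⊕ ℕ ⊕ ℕ) (s : Set (Unit ⊕ ℕ ⊕ ℕ)), k ∈ s → M k ≤ ⨆ k' ∈ s, M k' :=
    fun k s hk => le_biSup M hk
  have hUm : ∀ i, Measurable[M (Sum.inr (Sum.inr i))] (U i) := by
    intro i
    refine measurable_iff_comap_le.mpr (le_of_eq ?_)
    rw [hMdef]
    simp only [Sum.elim_inr]
    exact congrArg _ (BorelSpace.measurable_eq (α := ℝ))
  have hExm : ∀ i, MeasurableSet[M (Sum.inr (Sum.inl i))] (Ex i) :=
    fun i => MeasurableSpace.measurableSet_generateFrom (by simp)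
  have hEym : ∀ i, MeasurableSet[M (Sum.inr (Sum.inl i))] (Ey i) :=
    fun i => MeasurableSpace.measurableSet_generateFrom (by simp)
  have hNm : ∀ n, MeasurableSet[M (Sum.inl ())] {ω | N ω = n} := fun n => ⟨{n}, trivial, rfl⟩
  have hNms : ∀ n, MeasurableSet {ω | N ω = n} := fun n => hN (measurableSet_singleton n)
  -- the random variables G i = 1_{Ex i} U i, H i = 1_{Ey i} U i
  set G : ℕ → Ω → ℝ := fun i => (Ex i).indicator (U i) with hGdef
  set H : ℕ → Ω → ℝ := fun i => (Ey i).indicator (U i) with hHdef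
  have hGa : ∀ i, Measurable (G i) := fun i => (hU i).indicator (hmx i)
  have hHa : ∀ i, Measurable (H i) := fun i => (hU i).indicator (hmy i)
  have hUint1 : ∀ i, Integrable (U i) P := by
    intro i
    refine ((hUint i).add (integrable_const 1)).mono' (hU i).aestronglyMeasurable ?_
    filter_upwards with ω
    simp only [Pi.add_apply, Real.norm_eq_abs]
    nlinarith [sq_nonneg (|U i ω| - 1), sq_abs (U i ω), abs_nonneg (U i ω)]
  have hGint : ∀ i, Integrable (G i) P := fun i => (hUint1 i).indicator (hmx i)
  have hHint : ∀ i, Integrable (H i) P := fun i => (hUint1 i).indicator (hmy i)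
  -- measurability with respect to the sup over the range of Sum.inr
  have hGmeas : ∀ i, Measurable[⨆ k ∈ (Set.range Sum.inr : Set (Unit ⊕ ℕ ⊕ ℕ)), M k] (G i) := by
    intro i
    exact Measurable.indicator
      ((hUm i).mono (hle2 (Sum.inr (Sum.inr i)) (Set.range Sum.inr) (Set.mem_range_self _)) le_rfl)
      (hle2 (Sum.inr (Sum.inl i)) (Set.range Sum.inr) (Set.mem_range_self _) _ (hExm i))
  have hHmeas : ∀ i, Measurable[⨆ k ∈ (Set.range Sum.inr : Set (Unit ⊕ ℕ ⊕ ℕ)), M k] (H i) := by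
    intro i
    exact Measurable.indicator
      ((hUm i).mono (hle2 (Sum.inr (Sum.inr i)) (Set.range Sum.inr) (Set.mem_range_self _)) le_rfl)
      (hle2 (Sum.inr (Sum.inl i)) (Set.range Sum.inr) (Set.mem_range_self _) _ (hEym i))
  -- the mean of the atoms
  have hintG : ∀ i, ∫ ω, G i ω ∂P = px * m := by
    intro i
    have hmeas1 : Measurable[⨆ k ∈ ({Sum.inr (Sum.inl i)} : Set (Unit ⊕ ℕ ⊕ ℕ)), M k]
        ((Ex i).indicator (1 : Ω → ℝ)) :=
      Measurable.indicator measurable_const (hle2 (Sum.inr (Sum.inl i)) {Sum.inr (Sum.inl i)} rfl _ (hExm i))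
    have hmeas2 : Measurable[⨆ k ∈ ({Sum.inr (Sum.inr i)} : Set (Unit ⊕ ℕ ⊕ ℕ)), M k] (U i) :=
      (hUm i).mono (hle2 (Sum.inr (Sum.inr i)) {Sum.inr (Sum.inr i)} rfl) le_rfl
    have h1 : IndepFun ((Ex i).indicator (1 : Ω → ℝ)) (U i) P :=
      hpair (by simp) hmeas1 hmeas2
    have h2 := IndepFun.integral_fun_mul_eq_mul_integral h1 (measurable_const.indicator (hmx i)).aestronglyMeasurable
      (hU i).aestronglyMeasurable
    calc ∫ ω, G i ω ∂P = ∫ ω, (Ex i).indicator (1 : Ω → ℝ) ω * U i ω ∂P := by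
          refine integral_congr_ae (Filter.Eventually.of_forall fun ω => ?_)
          by_cases h : ω ∈ Ex i <;> simp [hGdef, Set.indicator_apply, h]
      _ = px * m := by rw [h2, integral_indicator_one (hmx i), measureReal_def, hm i, hpx i]
  have hintH : ∀ i, ∫ ω, H i ω ∂P = py * m := by
    intro i
    have hmeas1 : Measurable[⨆ k ∈ ({Sum.inr (Sum.inl i)} : Set (Unit ⊕ ℕ ⊕ ℕ)), M k]
        ((Ey i).indicator (1 : Ω → ℝ)) :=
      Measurable.indicator measurable_const (hle2 (Sum.inr (Sum.inl i)) {Sum.inr (Sum.inl i)} rfl _ (hEym i))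
    have hmeas2 : Measurable[⨆ k ∈ ({Sum.inr (Sum.inr i)} : Set (Unit ⊕ ℕ ⊕ ℕ)), M k] (U i) :=
      (hUm i).mono (hle2 (Sum.inr (Sum.inr i)) {Sum.inr (Sum.inr i)} rfl) le_rfl
    have h1 : IndepFun ((Ey i).indicator (1 : Ω → ℝ)) (U i) P :=
      hpair (by simp) hmeas1 hmeas2
    have h2 := IndepFun.integral_fun_mul_eq_mul_integral h1 (measurable_const.indicator (hmy i)).aestronglyMeasurable
      (hU i).aestronglyMeasurable
    calc ∫ ω, H i ω ∂P = ∫ ω, (Ey i).indicator (1 : Ω → ℝ) ω * U i ω ∂P := by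
          refine integral_congr_ae (Filter.Eventually.of_forall fun ω => ?_)
          by_cases h : ω ∈ Ey i <;> simp [hHdef, Set.indicator_apply, h]
      _ = py * m := by rw [h2, integral_indicator_one (hmy i), measureReal_def, hm i, hpy i]
  -- diagonal second moment atom
  have hdiag : ∀ i, ∫ ω, G i ω * H i ω ∂P = pxy * m2 := by
    intro i
    have hmeas1 : Measurable[⨆ k ∈ ({Sum.inr (Sum.inl i)} : Set (Unit ⊕ ℕ ⊕ ℕ)), M k]
        ((Ex i ∩ Ey i).indicator (1 : Ω → ℝ)) :=
      Measurable.indicator measurable_const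
        (hle2 (Sum.inr (Sum.inl i)) {Sum.inr (Sum.inl i)} rfl _ ((hExm i).inter (hEym i)))
    have hmeas2 : Measurable[⨆ k ∈ ({Sum.inr (Sum.inr i)} : Set (Unit ⊕ ℕ ⊕ ℕ)), M k]
        (fun ω => U i ω * U i ω) :=
      Measurable.mul ((hUm i).mono (hle2 (Sum.inr (Sum.inr i)) {Sum.inr (Sum.inr i)} rfl) le_rfl)
        ((hUm i).mono (hle2 (Sum.inr (Sum.inr i)) {Sum.inr (Sum.inr i)} rfl) le_rfl)
    have h1 : IndepFun ((Ex i ∩ Ey i).indicator (1 : Ω → ℝ)) (fun ω => U i ω * U i ω) P :=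
      hpair (by simp) hmeas1 hmeas2
    have h2 := IndepFun.integral_fun_mul_eq_mul_integral h1
      (measurable_const.indicator ((hmx i).inter (hmy i))).aestronglyMeasurable
      ((hU i).mul (hU i)).aestronglyMeasurable
    have h3 : ∫ ω, U i ω * U i ω ∂P = m2 := by
      rw [← hm2 i]
      refine integral_congr_ae (Filter.Eventually.of_forall fun ω => ?_)
      ring
    calc ∫ ω, G i ω * H i ω ∂P
        = ∫ ω, (Ex i ∩ Ey i).indicator (1 : Ω → ℝ) ω * (U i ω * U i ω) ∂P := by
          refine integral_congr_ae (Filter.Eventually.of_forall fun ω => ?_)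
          by_cases hx : ω ∈ Ex i <;> by_cases hy : ω ∈ Ey i <;>
            simp [hGdef, hHdef, Set.indicator_apply, hx, hy]
      _ = pxy * m2 := by rw [h2, integral_indicator_one ((hmx i).inter (hmy i)), measureReal_def, h3, hpxy i]
  -- independence of U i and U j, and of G i and H j, for i ≠ j
  have hUU : ∀ i j, i ≠ j → IndepFun (U i) (U j) P := by
    intro i j hij
    refine hpair (s := {Sum.inr (Sum.inr i)}) (t := {Sum.inr (Sum.inr j)}) (by simp [hij]) ?_ ?_
    · exact (hUm i).mono (hle2 (Sum.inr (Sum.inr i)) {Sum.inr (Sum.inr i)} rfl) le_rfl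
    · exact (hUm j).mono (hle2 (Sum.inr (Sum.inr j)) {Sum.inr (Sum.inr j)} rfl) le_rfl
  have hGH : ∀ i j, i ≠ j → IndepFun (G i) (H j) P := by
    intro i j hij
    refine hpair (s := {Sum.inr (Sum.inl i), Sum.inr (Sum.inr i)})
      (t := {Sum.inr (Sum.inl j), Sum.inr (Sum.inr j)}) ?_ ?_ ?_
    · simp [Set.disjoint_left, hij]
    · exact Measurable.indicator
        ((hUm i).mono (hle2 (Sum.inr (Sum.inr i)) _ (by simp)) le_rfl)
        (hle2 (Sum.inr (Sum.inl i)) {Sum.inr (Sum.inl i), Sum.inr (Sum.inr i)} (by simp) _ (hExm i))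
    · exact Measurable.indicator
        ((hUm j).mono (hle2 (Sum.inr (Sum.inr j)) _ (by simp)) le_rfl)
        (hle2 (Sum.inr (Sum.inl j)) {Sum.inr (Sum.inl j), Sum.inr (Sum.inr j)} (by simp) _ (hEym j))
  have hoff : ∀ i j, i ≠ j → ∫ ω, G i ω * H j ω ∂P = (px * m) * (py * m) := by
    intro i j hij
    rw [IndepFun.integral_fun_mul_eq_mul_integral (hGH i j hij) (hGa i).aestronglyMeasurable (hHa j).aestronglyMeasurable,
      hintG i, hintH j]
  -- conditioning on the value of N
  have hcore : ∀ (n : ℕ) (f : Ω → ℝ),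
      Measurable[⨆ k ∈ (Set.range Sum.inr : Set (Unit ⊕ ℕ ⊕ ℕ)), M k] f →
      AEStronglyMeasurable f P →
      ∫ ω in {ω | N ω = n}, f ω ∂P = (P {ω | N ω = n}).toReal * ∫ ω, f ω ∂P := by
    intro n f hf hf'
    have hmeas1 : Measurable[⨆ k ∈ ({Sum.inl ()} : Set (Unit ⊕ ℕ ⊕ ℕ)), M k]
        (({ω | N ω = n} : Set Ω).indicator (1 : Ω → ℝ)) :=
      Measurable.indicator measurable_const (hle2 (Sum.inl ()) {Sum.inl ()} rfl _ (hNm n))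
    have h1 : IndepFun (({ω | N ω = n} : Set Ω).indicator (1 : Ω → ℝ)) f P :=
      hpair (s := {Sum.inl ()}) (t := Set.range Sum.inr) (by simp [Set.disjoint_left]) hmeas1 hf
    have h2 := IndepFun.integral_fun_mul_eq_mul_integral h1 (measurable_const.indicator (hNms n)).aestronglyMeasurable hf'
    calc ∫ ω in {ω | N ω = n}, f ω ∂P
        = ∫ ω, ({ω | N ω = n} : Set Ω).indicator f ω ∂P := (integral_indicator (hNms n)).symm
      _ = ∫ ω, ({ω | N ω = n} : Set Ω).indicator (1 : Ω → ℝ) ω * f ω ∂P := by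
          refine integral_congr_ae (Filter.Eventually.of_forall fun ω => ?_)
          by_cases h : ω ∈ ({ω | N ω = n} : Set Ω) <;> simp [Set.indicator_apply, h]
      _ = (P {ω | N ω = n}).toReal * ∫ ω, f ω ∂P := by
          rw [h2, integral_indicator_one (hNms n), measureReal_def]
  -- the random sums
  set Zx : Ω → ℝ := fun ω => ∑ i ∈ Finset.Icc 1 (N ω), G i ω with hZxdef
  set Zy : Ω → ℝ := fun ω => ∑ j ∈ Finset.Icc 1 (N ω), H j ω with hZydef
  have hZxm : Measurable Zx := by
    have h : Measurable fun p : Ω × ℕ => ∑ i ∈ Finset.Icc 1 p.2, G i p.1 :=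
      measurable_from_prod_countable_left fun n => by simpa using Finset.measurable_sum (Finset.Icc 1 n) (fun i _ => hGa i)
    exact h.comp (measurable_id.prodMk hN)
  have hZym : Measurable Zy := by
    have h : Measurable fun p : Ω × ℕ => ∑ i ∈ Finset.Icc 1 p.2, H i p.1 :=
      measurable_from_prod_countable_left fun n => by simpa using Finset.measurable_sum (Finset.Icc 1 n) (fun i _ => hHa i)
    exact h.comp (measurable_id.prodMk hN)
  -- partition facts
  have hsU : (⋃ n, {ω | N ω = n}) = Set.univ := by
    ext ω; simp [Set.mem_iUnion]
  have hsd : Pairwise (Function.onFun Disjoint fun n => {ω | N ω = n}) := by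
    intro a b hab
    simp only [Function.onFun, Set.disjoint_left]
    rintro ω (h1 : N ω = a) (h2 : N ω = b)
    exact hab (h1 ▸ h2 ▸ rfl)
  have hNcast : Measurable fun ω => (N ω : ℝ) := measurable_from_top.comp hN
  have hNint : Integrable (fun ω => (N ω : ℝ)) P := by
    refine (hN2.add (integrable_const 1)).mono' hNcast.aestronglyMeasurable ?_
    filter_upwards with ω
    simp only [Pi.add_apply, Real.norm_eq_abs]
    have h0 : (0:ℝ) ≤ (N ω : ℝ) := Nat.cast_nonneg _
    rw [abs_of_nonneg h0]
    nlinarith [sq_nonneg ((N ω : ℝ) - 1)]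
  have hsum1 : HasSum (fun n : ℕ => (n : ℝ) * (P {ω | N ω = n}).toReal) en := by
    have h := hasSum_integral_iUnion hNms hsd (by rw [hsU]; exact hNint.integrableOn)
    rw [hsU, setIntegral_univ, hen] at h
    have heq : ∀ n, ∫ ω in {ω | N ω = n}, (N ω : ℝ) ∂P = (n : ℝ) * (P {ω | N ω = n}).toReal := by
      intro n
      rw [setIntegral_congr_fun (hNms n) (fun ω (hω : N ω = n) => by rw [hω]),
        setIntegral_const, smul_eq_mul, mul_comm, measureReal_def]
    rwa [show (fun n => ∫ ω in {ω | N ω = n}, (N ω : ℝ) ∂P)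
      = fun n : ℕ => (n : ℝ) * (P {ω | N ω = n}).toReal from funext heq] at h
  have hsum2 : HasSum (fun n : ℕ => (n : ℝ) ^ 2 * (P {ω | N ω = n}).toReal) en2 := by
    have h := hasSum_integral_iUnion hNms hsd (by rw [hsU]; exact hN2.integrableOn)
    rw [hsU, setIntegral_univ, hen2] at h
    have heq : ∀ n, ∫ ω in {ω | N ω = n}, ((N ω : ℝ)) ^ 2 ∂P
        = (n : ℝ) ^ 2 * (P {ω | N ω = n}).toReal := by
      intro n
      rw [setIntegral_congr_fun (hNms n) (fun ω (hω : N ω = n) => by rw [hω]),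
        setIntegral_const, smul_eq_mul, mul_comm, measureReal_def]
    rwa [show (fun n => ∫ ω in {ω | N ω = n}, ((N ω : ℝ)) ^ 2 ∂P)
      = fun n : ℕ => (n : ℝ) ^ 2 * (P {ω | N ω = n}).toReal from funext heq] at h
  -- identical distribution of |U i|
  set cAbs : ℝ := ∫ ω, |U 0 ω| ∂P with hcAbsdef
  have hAbs : ∀ i, ∫ ω, |U i ω| ∂P = cAbs := by
    intro i
    calc ∫ ω, |U i ω| ∂P = ∫ x, |x| ∂(Measure.map (U i) P) :=
          (integral_map (hU i).aemeasurable measurable_abs.aestronglyMeasurable).symm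
      _ = ∫ x, |x| ∂(Measure.map (U 0) P) := by rw [hUid i 0]
      _ = cAbs := integral_map (hU 0).aemeasurable measurable_abs.aestronglyMeasurable
  have hGnorm_le : ∀ i, ∫ ω, ‖G i ω‖ ∂P ≤ cAbs := by
    intro i
    rw [← hAbs i]
    refine integral_mono (hGint i).norm (hUint1 i).abs fun ω => ?_
    by_cases h : ω ∈ Ex i <;> simp [hGdef, Set.indicator_apply, h, abs_nonneg]
  have hHnorm_le : ∀ i, ∫ ω, ‖H i ω‖ ∂P ≤ cAbs := by
    intro i
    rw [← hAbs i]
    refine integral_mono (hHint i).norm (hUint1 i).abs fun ω => ?_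
    by_cases h : ω ∈ Ey i <;> simp [hHdef, Set.indicator_apply, h, abs_nonneg]
  have hcomp : ∀ (i : ℕ) (φ : ℝ → ℝ), Measurable φ →
      Measurable[M (Sum.inr (Sum.inr i))] (fun ω => φ (U i ω)) :=
    fun i φ hφ s hs => hUm i (hφ hs)
  have hGmeasN : ∀ i, Measurable[⨆ k ∈ (Set.range Sum.inr : Set (Unit ⊕ ℕ ⊕ ℕ)), M k]
      (fun ω => ‖G i ω‖) := by
    intro i
    have h2 : (fun ω => ‖G i ω‖) = (Ex i).indicator (fun ω => |U i ω|) := funext fun ω => by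
      by_cases h : ω ∈ Ex i <;> simp [hGdef, Set.indicator_apply, h]
    rw [h2]
    exact Measurable.indicator
      (((hcomp i _ measurable_abs)).mono
        (hle2 (Sum.inr (Sum.inr i)) (Set.range Sum.inr) (Set.mem_range_self _)) le_rfl)
      (hle2 (Sum.inr (Sum.inl i)) (Set.range Sum.inr) (Set.mem_range_self _) _ (hExm i))
  -- per-n values for Zx
  have hZx_eqOn : ∀ n, Set.EqOn Zx (fun ω => ∑ i ∈ Finset.Icc 1 n, G i ω) {ω | N ω = n} :=
    fun n ω hω => by simp only [hZxdef]; rw [show N ω = n from hω]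
  have hZx_on : ∀ n, IntegrableOn Zx {ω | N ω = n} P := fun n =>
    (integrableOn_congr_fun (hZx_eqOn n) (hNms n)).mpr
      (integrable_finset_sum _ fun i _ => hGint i).integrableOn
  have hZx_val : ∀ n, ∫ ω in {ω | N ω = n}, Zx ω ∂P
      = (n : ℝ) * (P {ω | N ω = n}).toReal * (px * m) := by
    intro n
    rw [setIntegral_congr_fun (hNms n) (hZx_eqOn n)]
    rw [integral_finset_sum _ fun i _ => (hGint i).integrableOn]
    have heach : ∀ i ∈ Finset.Icc 1 n, ∫ ω in {ω | N ω = n}, G i ω ∂P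
        = (P {ω | N ω = n}).toReal * (px * m) := fun i _ => by
      rw [hcore n (G i) (hGmeas i) (hGa i).aestronglyMeasurable, hintG i]
    rw [Finset.sum_congr rfl heach, Finset.sum_const, Nat.card_Icc]
    simp only [Nat.add_sub_cancel, nsmul_eq_mul]
    ring
  have hZx_norm : ∀ n, ∫ ω in {ω | N ω = n}, ‖Zx ω‖ ∂P
      ≤ (n : ℝ) * (P {ω | N ω = n}).toReal * cAbs := by
    intro n
    rw [setIntegral_congr_fun (hNms n)
      (fun ω hω => congrArg norm (hZx_eqOn n hω) :
        Set.EqOn (fun ω => ‖Zx ω‖) (fun ω => ‖∑ i ∈ Finset.Icc 1 n, G i ω‖) {ω | N ω = n})]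
    calc ∫ ω in {ω | N ω = n}, ‖∑ i ∈ Finset.Icc 1 n, G i ω‖ ∂P
        ≤ ∫ ω in {ω | N ω = n}, ∑ i ∈ Finset.Icc 1 n, ‖G i ω‖ ∂P := by
          refine setIntegral_mono_on ((integrable_finset_sum _ fun i _ => hGint i).norm.integrableOn)
            ((integrable_finset_sum _ fun i _ => (hGint i).norm).integrableOn) (hNms n)
            fun ω _ => norm_sum_le _ _
      _ = ∑ i ∈ Finset.Icc 1 n, ∫ ω in {ω | N ω = n}, ‖G i ω‖ ∂P :=
          integral_finset_sum _ fun i _ => (hGint i).norm.integrableOn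
      _ ≤ ∑ i ∈ Finset.Icc 1 n, (P {ω | N ω = n}).toReal * cAbs := by
          refine Finset.sum_le_sum fun i _ => ?_
          rw [hcore n (fun ω => ‖G i ω‖) (hGmeasN i) (hGa i).norm.aestronglyMeasurable]
          exact mul_le_mul_of_nonneg_left (hGnorm_le i) ENNReal.toReal_nonneg
      _ = (n : ℝ) * (P {ω | N ω = n}).toReal * cAbs := by
          rw [Finset.sum_const, Nat.card_Icc]
          simp only [Nat.add_sub_cancel, nsmul_eq_mul]
          ring
  have hZxint : Integrable Zx P := by
    have h := integrableOn_iUnion_of_summable_integral_norm hZx_on ?_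
    · rwa [hsU, integrableOn_univ] at h
    · refine Summable.of_nonneg_of_le
        (fun n => setIntegral_nonneg (hNms n) fun ω _ => norm_nonneg _) hZx_norm ?_
      exact (hsum1.summable.mul_right cAbs)
  have hmeanX : ∫ ω, Zx ω ∂P = m * en * px := by
    have h := hasSum_integral_iUnion hNms hsd (by rw [hsU]; exact hZxint.integrableOn)
    rw [hsU, setIntegral_univ] at h
    rw [show (fun n => ∫ ω in {ω | N ω = n}, Zx ω ∂P)
      = fun n : ℕ => ((n : ℝ) * (P {ω | N ω = n}).toReal) * (px * m) from
      funext fun n => by rw [hZx_val n]] at h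
    have h' := hsum1.mul_right (px * m)
    rw [h.unique h']
    ring
  -- the product atoms
  have hm2nonneg : 0 ≤ m2 := by
    rw [← hm2 0]; exact integral_nonneg fun ω => sq_nonneg _
  have hGH_val : ∀ i j, ∫ ω, G i ω * H j ω ∂P
      = if i = j then pxy * m2 else (px * m) * (py * m) := by
    intro i j
    rcases eq_or_ne i j with rfl | hij
    · rw [if_pos rfl]; exact hdiag i
    · rw [if_neg hij]; exact hoff i j hij
  have hGH_int : ∀ i j, Integrable (fun ω => G i ω * H j ω) P := by
    intro i j
    rcases eq_or_ne i j with rfl | hij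
    · have h2 : (fun ω => G i ω * H i ω)
          = (Ex i ∩ Ey i).indicator (fun ω => U i ω ^ 2) := funext fun ω => by
        by_cases hx : ω ∈ Ex i <;> by_cases hy : ω ∈ Ey i <;>
          simp [hGdef, hHdef, Set.indicator_apply, hx, hy, sq]
      rw [h2]
      exact (hUint i).indicator ((hmx i).inter (hmy i))
    · exact (hGH i j hij).integrable_mul (hGint i) (hHint j)
  have hGHmeas : ∀ i j, Measurable[⨆ k ∈ (Set.range Sum.inr : Set (Unit ⊕ ℕ ⊕ ℕ)), M k]
      (fun ω => G i ω * H j ω) := fun i j => (hGmeas i).mul (hHmeas j)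
  have hHmeasN : ∀ i, Measurable[⨆ k ∈ (Set.range Sum.inr : Set (Unit ⊕ ℕ ⊕ ℕ)), M k]
      (fun ω => ‖H i ω‖) := by
    intro i
    have h2 : (fun ω => ‖H i ω‖) = (Ey i).indicator (fun ω => |U i ω|) := funext fun ω => by
      by_cases h : ω ∈ Ey i <;> simp [hHdef, Set.indicator_apply, h]
    rw [h2]
    exact Measurable.indicator
      (((hcomp i _ measurable_abs)).mono
        (hle2 (Sum.inr (Sum.inr i)) (Set.range Sum.inr) (Set.mem_range_self _)) le_rfl)
      (hle2 (Sum.inr (Sum.inl i)) (Set.range Sum.inr) (Set.mem_range_self _) _ (hEym i))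
  have hGHmeasN : ∀ i j, Measurable[⨆ k ∈ (Set.range Sum.inr : Set (Unit ⊕ ℕ ⊕ ℕ)), M k]
      (fun ω => ‖G i ω * H j ω‖) := by
    intro i j
    have h2 : (fun ω => ‖G i ω * H j ω‖) = fun ω => ‖G i ω‖ * ‖H j ω‖ :=
      funext fun ω => norm_mul _ _
    rw [h2]
    exact (hGmeasN i).mul (hHmeasN j)
  have hGle : ∀ i ω, |G i ω| ≤ |U i ω| := by
    intro i ω
    by_cases h : ω ∈ Ex i <;> simp [hGdef, Set.indicator_apply, h, abs_nonneg]
  have hHle : ∀ j ω, |H j ω| ≤ |U j ω| := by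
    intro j ω
    by_cases h : ω ∈ Ey j <;> simp [hHdef, Set.indicator_apply, h, abs_nonneg]
  have hb : ∀ i j ω, ‖G i ω * H j ω‖ ≤ |U i ω| * |U j ω| := by
    intro i j ω
    rw [Real.norm_eq_abs, abs_mul]
    exact mul_le_mul (hGle i ω) (hHle j ω) (abs_nonneg _) (abs_nonneg _)
  have hGH_norm_le : ∀ i j, ∫ ω, ‖G i ω * H j ω‖ ∂P ≤ cAbs ^ 2 + m2 := by
    intro i j
    rcases eq_or_ne i j with rfl | hij
    · have habs : (fun ω => |U i ω| * |U i ω|) = fun ω => U i ω ^ 2 :=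
        funext fun ω => by rw [abs_mul_abs_self, ← sq]
      calc ∫ ω, ‖G i ω * H i ω‖ ∂P ≤ ∫ ω, |U i ω| * |U i ω| ∂P :=
            integral_mono (hGH_int i i).norm (by rw [habs]; exact hUint i) (hb i i)
        _ = m2 := by rw [habs]; exact hm2 i
        _ ≤ cAbs ^ 2 + m2 := le_add_of_nonneg_left (sq_nonneg _)
    · have hUUabs : IndepFun (fun ω => |U i ω|) (fun ω => |U j ω|) P :=
        (hUU i j hij).comp measurable_abs measurable_abs
      have hint : Integrable (fun ω => |U i ω| * |U j ω|) P := by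
        have h := hUUabs.integrable_mul (hUint1 i).abs (hUint1 j).abs
        exact h
      calc ∫ ω, ‖G i ω * H j ω‖ ∂P ≤ ∫ ω, |U i ω| * |U j ω| ∂P :=
            integral_mono (hGH_int i j).norm hint (hb i j)
        _ = cAbs * cAbs := by
            rw [IndepFun.integral_fun_mul_eq_mul_integral hUUabs (hU i).abs.aestronglyMeasurable
              (hU j).abs.aestronglyMeasurable, hAbs i, hAbs j]
        _ ≤ cAbs ^ 2 + m2 := by nlinarith
  -- per-n values for the product
  have hZy_eqOn : ∀ n, Set.EqOn Zy (fun ω => ∑ j ∈ Finset.Icc 1 n, H j ω) {ω | N ω = n} :=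
    fun n ω hω => by simp only [hZydef]; rw [show N ω = n from hω]
  have hZxy_eqOn : ∀ n, Set.EqOn (fun ω => Zx ω * Zy ω)
      (fun ω => ∑ i ∈ Finset.Icc 1 n, ∑ j ∈ Finset.Icc 1 n, G i ω * H j ω) {ω | N ω = n} := by
    intro n ω hω
    simp only
    rw [hZx_eqOn n hω, hZy_eqOn n hω, Finset.sum_mul_sum]
  have hZxy_on : ∀ n, IntegrableOn (fun ω => Zx ω * Zy ω) {ω | N ω = n} P := fun n =>
    (integrableOn_congr_fun (hZxy_eqOn n) (hNms n)).mpr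
      (integrable_finset_sum _ fun i _ =>
        integrable_finset_sum _ fun j _ => hGH_int i j).integrableOn
  have hZxy_val : ∀ n, ∫ ω in {ω | N ω = n}, Zx ω * Zy ω ∂P
      = (P {ω | N ω = n}).toReal
        * ((n : ℝ) * (pxy * m2) + (n : ℝ) * ((n : ℝ) - 1) * ((px * m) * (py * m))) := by
    intro n
    rw [setIntegral_congr_fun (hNms n) (hZxy_eqOn n)]
    rw [integral_finset_sum _ fun i _ =>
      (integrable_finset_sum _ fun j _ => hGH_int i j).integrableOn]
    have hinner : ∀ i ∈ Finset.Icc 1 n,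
        ∫ ω in {ω | N ω = n}, ∑ j ∈ Finset.Icc 1 n, G i ω * H j ω ∂P
        = (P {ω | N ω = n}).toReal * (pxy * m2)
          + ((n : ℝ) - 1) * ((P {ω | N ω = n}).toReal * ((px * m) * (py * m))) := by
      intro i hi
      rw [integral_finset_sum _ fun j _ => (hGH_int i j).integrableOn]
      have heach : ∀ j ∈ Finset.Icc 1 n, ∫ ω in {ω | N ω = n}, G i ω * H j ω ∂P
          = (P {ω | N ω = n}).toReal
            * (if i = j then pxy * m2 else (px * m) * (py * m)) := fun j _ => by
        rw [hcore n _ (hGHmeas i j) ((hGa i).mul (hHa j)).aestronglyMeasurable, hGH_val i j]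
      rw [Finset.sum_congr rfl heach, ← Finset.add_sum_erase _ _ hi, if_pos rfl]
      have h1n : 1 ≤ n := le_trans (Finset.mem_Icc.mp hi).1 (Finset.mem_Icc.mp hi).2
      have hrest : ∑ j ∈ (Finset.Icc 1 n).erase i,
          (P {ω | N ω = n}).toReal * (if i = j then pxy * m2 else (px * m) * (py * m))
          = ((n : ℝ) - 1) * ((P {ω | N ω = n}).toReal * ((px * m) * (py * m))) := by
        rw [Finset.sum_congr rfl (fun j hj => by
          rw [if_neg fun hij => (Finset.ne_of_mem_erase hj) hij.symm])]
        rw [Finset.sum_const, Finset.card_erase_of_mem hi, Nat.card_Icc, nsmul_eq_mul,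
          Nat.add_sub_cancel, Nat.cast_sub h1n, Nat.cast_one]
      rw [hrest]
    rw [Finset.sum_congr rfl hinner, Finset.sum_const, Nat.card_Icc, nsmul_eq_mul,
      Nat.add_sub_cancel]
    ring
  have hZxy_norm : ∀ n, ∫ ω in {ω | N ω = n}, ‖Zx ω * Zy ω‖ ∂P
      ≤ (n : ℝ) ^ 2 * (P {ω | N ω = n}).toReal * (cAbs ^ 2 + m2) := by
    intro n
    rw [setIntegral_congr_fun (hNms n)
      (fun ω hω => congrArg norm (hZxy_eqOn n hω) :
        Set.EqOn (fun ω => ‖Zx ω * Zy ω‖)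
          (fun ω => ‖∑ i ∈ Finset.Icc 1 n, ∑ j ∈ Finset.Icc 1 n, G i ω * H j ω‖) {ω | N ω = n})]
    calc ∫ ω in {ω | N ω = n}, ‖∑ i ∈ Finset.Icc 1 n, ∑ j ∈ Finset.Icc 1 n, G i ω * H j ω‖ ∂P
        ≤ ∫ ω in {ω | N ω = n}, ∑ i ∈ Finset.Icc 1 n, ∑ j ∈ Finset.Icc 1 n, ‖G i ω * H j ω‖ ∂P := by
          refine setIntegral_mono_on
            ((integrable_finset_sum _ fun i _ => integrable_finset_sum _ fun j _ =>
              hGH_int i j).norm.integrableOn)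
            ((integrable_finset_sum _ fun i _ => integrable_finset_sum _ fun j _ =>
              (hGH_int i j).norm).integrableOn) (hNms n) fun ω _ => ?_
          exact (norm_sum_le _ _).trans (Finset.sum_le_sum fun i _ => norm_sum_le _ _)
      _ = ∑ i ∈ Finset.Icc 1 n, ∑ j ∈ Finset.Icc 1 n,
            ∫ ω in {ω | N ω = n}, ‖G i ω * H j ω‖ ∂P := by
          rw [integral_finset_sum _ fun i _ =>
            (integrable_finset_sum _ fun j _ => (hGH_int i j).norm).integrableOn]
          exact Finset.sum_congr rfl fun i _ =>
            integral_finset_sum _ fun j _ => (hGH_int i j).norm.integrableOn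
      _ ≤ ∑ i ∈ Finset.Icc 1 n, ∑ j ∈ Finset.Icc 1 n,
            (P {ω | N ω = n}).toReal * (cAbs ^ 2 + m2) := by
          refine Finset.sum_le_sum fun i _ => Finset.sum_le_sum fun j _ => ?_
          rw [hcore n _ (hGHmeasN i j) ((hGa i).mul (hHa j)).norm.aestronglyMeasurable]
          exact mul_le_mul_of_nonneg_left (hGH_norm_le i j) ENNReal.toReal_nonneg
      _ = (n : ℝ) ^ 2 * (P {ω | N ω = n}).toReal * (cAbs ^ 2 + m2) := by
          rw [Finset.sum_const, Finset.sum_const, Nat.card_Icc, Nat.add_sub_cancel,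
            nsmul_eq_mul, nsmul_eq_mul]
          ring
  have hZxyint : Integrable (fun ω => Zx ω * Zy ω) P := by
    have h := integrableOn_iUnion_of_summable_integral_norm hZxy_on ?_
    · rwa [hsU, integrableOn_univ] at h
    · refine Summable.of_nonneg_of_le
        (fun n => setIntegral_nonneg (hNms n) fun ω _ => norm_nonneg _) hZxy_norm ?_
      exact (hsum2.summable.mul_right (cAbs ^ 2 + m2))
  have hprod : ∫ ω, Zx ω * Zy ω ∂P = m2 * en * pxy + m ^ 2 * (en2 - en) * px * py := by
    have h := hasSum_integral_iUnion hNms hsd (by rw [hsU]; exact hZxyint.integrableOn)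
    rw [hsU, setIntegral_univ] at h
    rw [show (fun n => ∫ ω in {ω | N ω = n}, Zx ω * Zy ω ∂P) = fun n : ℕ =>
        ((n : ℝ) * (P {ω | N ω = n}).toReal) * (pxy * m2)
          + ((n : ℝ) ^ 2 * (P {ω | N ω = n}).toReal
              - (n : ℝ) * (P {ω | N ω = n}).toReal) * ((px * m) * (py * m))
      from funext fun n => by rw [hZxy_val n]; ring] at h
    have h' := (hsum1.mul_right (pxy * m2)).add
      ((hsum2.sub hsum1).mul_right ((px * m) * (py * m)))
    rw [h.unique h']
    ring
  -- conclusion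
  constructor
  · calc ∫ ω, (∑ i ∈ Finset.Icc 1 (N ω), if ω ∈ Ex i then U i ω else 0) ∂P
        = ∫ ω, Zx ω ∂P := by
          refine integral_congr_ae (Filter.Eventually.of_forall fun ω => ?_)
          simp only [hZxdef]
          exact Finset.sum_congr rfl fun i _ => by
            by_cases h : ω ∈ Ex i <;> simp [hGdef, Set.indicator_apply, h]
      _ = m * en * px := hmeanX
  · calc ∫ ω, (∑ i ∈ Finset.Icc 1 (N ω), if ω ∈ Ex i then U i ω else 0) *
          (∑ j ∈ Finset.Icc 1 (N ω), if ω ∈ Ey j then U j ω else 0) ∂P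
        = ∫ ω, Zx ω * Zy ω ∂P := by
          refine integral_congr_ae (Filter.Eventually.of_forall fun ω => ?_)
          have h1 : (∑ i ∈ Finset.Icc 1 (N ω), if ω ∈ Ex i then U i ω else 0) = Zx ω := by
            simp only [hZxdef]
            exact Finset.sum_congr rfl fun i _ => by
              by_cases h : ω ∈ Ex i <;> simp [hGdef, Set.indicator_apply, h]
          have h2 : (∑ j ∈ Finset.Icc 1 (N ω), if ω ∈ Ey j then U j ω else 0) = Zy ω := by
            simp only [hZydef]
            exact Finset.sum_congr rfl fun j _ => by
              by_cases h : ω ∈ Ey j <;> simp [hHdef, Set.indicator_apply, h]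
          exact congrArg₂ (· * ·) h1 h2
      _ = m2 * en * pxy + m ^ 2 * (en2 - en) * px * py := hprod

private lemma iIndep_mono' {Ω ι : Type*} {mΩ : MeasurableSpace Ω} {P : Measure Ω}
    {m m' : ι → MeasurableSpace Ω} (h : iIndep m P) (hle : ∀ i, m' i ≤ m i) :
    iIndep m' P := by
  rw [iIndep_iff] at h ⊢
  intro s f hf
  exact h s fun i hi => hle i _ (hf i hi)


/-- Random token field `Z_{RT}(x) = ∑_{i=1}^{N} U_i 1_{x∈B_i}`, with `N` an `ℕ`-valued random
variable with finite second moment, `(B_i)` i.i.d. random sets (`Ex i = {x ∈ B_i}`,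
`Ey i = {y ∈ B_i}`), `(U_i)` i.i.d. with mean `m` and second moment `m2`, all jointly
independent.  Then `E[Z_{RT}(x)] = EU·EN·p_x`,
`Cov(Z_{RT}(x),Z_{RT}(y)) = E[U²]·EN·p_{xy} + (EU)²·(Var N - EN)·p_x·p_y`, and the
correlation is `(a·p_{xy}+b·p_x·p_y)/√((a+b·p_x)(a+b·p_y)·p_x·p_y)` with
`a = E[U²]·EN` and `b = (EU)²·(Var N - EN)`. -/
theorem stmt9 {Ω : Type*} [MeasurableSpace Ω] (P : Measure Ω) [IsProbabilityMeasure P]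
    (N : Ω → ℕ) (hN : Measurable N) (hN2 : Integrable (fun ω => ((N ω : ℝ)) ^ 2) P)
    (en en2 : ℝ) (hen : ∫ ω, (N ω : ℝ) ∂P = en) (hen2 : ∫ ω, ((N ω : ℝ)) ^ 2 ∂P = en2)
    (hen0 : 0 < en)
    (Ex Ey : ℕ → Set Ω) (hmx : ∀ i, MeasurableSet (Ex i)) (hmy : ∀ i, MeasurableSet (Ey i))
    (U : ℕ → Ω → ℝ) (hU : ∀ i, Measurable (U i))
    (hUid : ∀ i j, Measure.map (U i) P = Measure.map (U j) P)
    (hUint : ∀ i, Integrable (fun ω => (U i ω) ^ 2) P)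
    (m m2 : ℝ) (hm : ∀ i, ∫ ω, U i ω ∂P = m) (hm2 : ∀ i, ∫ ω, (U i ω) ^ 2 ∂P = m2)
    (hind : iIndep
      (Sum.elim (fun _ : Unit => MeasurableSpace.comap N ⊤)
        (Sum.elim (fun i : ℕ => MeasurableSpace.generateFrom {Ex i, Ey i})
          (fun i : ℕ => MeasurableSpace.comap (U i) (borel ℝ)))) P)
    (px py pxy : ℝ) (hpx0 : 0 < px) (hpy0 : 0 < py)
    (hpx : ∀ i, (P (Ex i)).toReal = px) (hpy : ∀ i, (P (Ey i)).toReal = py)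
    (hpxy : ∀ i, (P (Ex i ∩ Ey i)).toReal = pxy) :
    let Z : (ℕ → Set Ω) → Ω → ℝ :=
      fun E ω => ∑ i ∈ Finset.Icc 1 (N ω), if ω ∈ E i then U i ω else 0
    let a : ℝ := m2 * en
    let b : ℝ := m ^ 2 * ((en2 - en ^ 2) - en)
    (∫ ω, Z Ex ω ∂P = m * en * px) ∧
    ((∫ ω, Z Ex ω * Z Ey ω ∂P) - (∫ ω, Z Ex ω ∂P) * (∫ ω, Z Ey ω ∂P) =
      a * pxy + b * px * py) ∧
    (((∫ ω, Z Ex ω * Z Ey ω ∂P) - (∫ ω, Z Ex ω ∂P) * (∫ ω, Z Ey ω ∂P)) /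
        Real.sqrt (((∫ ω, (Z Ex ω) ^ 2 ∂P) - (∫ ω, Z Ex ω ∂P) ^ 2) *
          ((∫ ω, (Z Ey ω) ^ 2 ∂P) - (∫ ω, Z Ey ω ∂P) ^ 2)) =
      (a * pxy + b * px * py) / Real.sqrt ((a + b * px) * (a + b * py) * px * py)) := by
  intro Z a b
  -- independence for derived families
  have hindyx : iIndep
      (Sum.elim (fun _ : Unit => MeasurableSpace.comap N ⊤)
        (Sum.elim (fun i : ℕ => MeasurableSpace.generateFrom {Ey i, Ex i})
          (fun i : ℕ => MeasurableSpace.comap (U i) (borel ℝ)))) P := by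
    refine iIndep_mono' hind ?_
    rintro ((_) | (i | i))
    · exact le_rfl
    · simp only [Sum.elim_inr, Sum.elim_inl]
      exact le_of_eq (by rw [Set.pair_comm])
    · exact le_rfl
  have hindxx : iIndep
      (Sum.elim (fun _ : Unit => MeasurableSpace.comap N ⊤)
        (Sum.elim (fun i : ℕ => MeasurableSpace.generateFrom {Ex i, Ex i})
          (fun i : ℕ => MeasurableSpace.comap (U i) (borel ℝ)))) P := by
    refine iIndep_mono' hind ?_
    rintro ((_) | (i | i))
    · exact le_rfl
    · simp only [Sum.elim_inr, Sum.elim_inl]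
      refine MeasurableSpace.generateFrom_mono ?_
      intro t ht
      simp only [Set.mem_insert_iff, Set.mem_singleton_iff] at ht ⊢
      tauto
    · exact le_rfl
  have hindyy : iIndep
      (Sum.elim (fun _ : Unit => MeasurableSpace.comap N ⊤)
        (Sum.elim (fun i : ℕ => MeasurableSpace.generateFrom {Ey i, Ey i})
          (fun i : ℕ => MeasurableSpace.comap (U i) (borel ℝ)))) P := by
    refine iIndep_mono' hind ?_
    rintro ((_) | (i | i))
    · exact le_rfl
    · simp only [Sum.elim_inr, Sum.elim_inl]
      refine MeasurableSpace.generateFrom_mono ?_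
      intro t ht
      simp only [Set.mem_insert_iff, Set.mem_singleton_iff] at ht ⊢
      tauto
    · exact le_rfl
  obtain ⟨hx1, hxy⟩ := RT_aux P N hN hN2 en en2 hen hen2 Ex Ey hmx hmy U hU hUid hUint
    m m2 hm hm2 hind px py pxy hpx hpy hpxy
  obtain ⟨hy1, -⟩ := RT_aux P N hN hN2 en en2 hen hen2 Ey Ex hmy hmx U hU hUid hUint
    m m2 hm hm2 hindyx py px pxy hpy hpx
    (fun i => by rw [Set.inter_comm]; exact hpxy i)
  obtain ⟨-, hxx⟩ := RT_aux P N hN hN2 en en2 hen hen2 Ex Ex hmx hmx U hU hUid hUint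
    m m2 hm hm2 hindxx px px px hpx hpx
    (fun i => by rw [Set.inter_self]; exact hpx i)
  obtain ⟨-, hyy⟩ := RT_aux P N hN hN2 en en2 hen hen2 Ey Ey hmy hmy U hU hUid hUint
    m m2 hm hm2 hindyy py py py hpy hpy
    (fun i => by rw [Set.inter_self]; exact hpy i)
  have hsqx : ∫ ω, ((∑ i ∈ Finset.Icc 1 (N ω), if ω ∈ Ex i then U i ω else 0)) ^ 2 ∂P
      = ∫ ω, (∑ i ∈ Finset.Icc 1 (N ω), if ω ∈ Ex i then U i ω else 0) *
          (∑ j ∈ Finset.Icc 1 (N ω), if ω ∈ Ex j then U j ω else 0) ∂P :=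
    integral_congr_ae (Filter.Eventually.of_forall fun ω => pow_two _)
  have hsqy : ∫ ω, ((∑ i ∈ Finset.Icc 1 (N ω), if ω ∈ Ey i then U i ω else 0)) ^ 2 ∂P
      = ∫ ω, (∑ i ∈ Finset.Icc 1 (N ω), if ω ∈ Ey i then U i ω else 0) *
          (∑ j ∈ Finset.Icc 1 (N ω), if ω ∈ Ey j then U j ω else 0) ∂P :=
    integral_congr_ae (Filter.Eventually.of_forall fun ω => pow_two _)
  have hnum : (∫ ω, (∑ i ∈ Finset.Icc 1 (N ω), if ω ∈ Ex i then U i ω else 0) *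
          (∑ j ∈ Finset.Icc 1 (N ω), if ω ∈ Ey j then U j ω else 0) ∂P)
        - (∫ ω, (∑ i ∈ Finset.Icc 1 (N ω), if ω ∈ Ex i then U i ω else 0) ∂P) *
          (∫ ω, (∑ j ∈ Finset.Icc 1 (N ω), if ω ∈ Ey j then U j ω else 0) ∂P)
      = (m2 * en) * pxy + (m ^ 2 * ((en2 - en ^ 2) - en)) * px * py := by
    rw [hxy, hx1, hy1]; ring
  have harg : ((∫ ω, ((∑ i ∈ Finset.Icc 1 (N ω), if ω ∈ Ex i then U i ω else 0)) ^ 2 ∂P)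
        - (∫ ω, (∑ i ∈ Finset.Icc 1 (N ω), if ω ∈ Ex i then U i ω else 0) ∂P) ^ 2) *
      ((∫ ω, ((∑ i ∈ Finset.Icc 1 (N ω), if ω ∈ Ey i then U i ω else 0)) ^ 2 ∂P)
        - (∫ ω, (∑ i ∈ Finset.Icc 1 (N ω), if ω ∈ Ey i then U i ω else 0) ∂P) ^ 2)
      = ((m2 * en) + (m ^ 2 * ((en2 - en ^ 2) - en)) * px)
        * ((m2 * en) + (m ^ 2 * ((en2 - en ^ 2) - en)) * py) * px * py := by
    rw [hsqx, hsqy, hxx, hyy, hx1, hy1]; ring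
  refine ⟨hx1, hnum, ?_⟩
  show _ / Real.sqrt _ = _ / Real.sqrt _
  rw [hnum, harg]
end

section
/- Define A_n = ∑_{I,J⊆{1,…,n}, g(I)=g(J)} P(x∈C_I, y∈C_J), where g(I)=1_{I≠∅}·max I. Then A_n satisfies the recurrence A_{n+1} = P(x,y∉B)·A_n + P(x,y∈B), and hence A_n = P(x,y∈B)/(1-P(x,y∉B)) + [P(x∈B,y∉B)+P(x∉B,y∈B)]/(1-P(x,y∉B))·P(x,y∉B)^n, provided P(x,y∉B) < 1. -/
open Finset
open scoped Classical


private lemma icc_succ (n : ℕ) : Finset.Icc 1 (n+1) = insert (n+1) (Finset.Icc 1 n) := by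
  ext x; simp [Nat.lt_succ_iff]; omega

section setlemmas
variable {n : ℕ} {I J : Finset ℕ} (haI : (n+1) ∉ I) (haJ : (n+1) ∉ J)
include haI haJ

private lemma eInsInt : insert (n+1) I ∩ insert (n+1) J = insert (n+1) (I ∩ J) := by
  ext x; rcases eq_or_ne x (n+1) with h | h <;> simp [h, haI, haJ] <;> tauto

private lemma eInsSd : insert (n+1) I \ insert (n+1) J = I \ J := by
  ext x; rcases eq_or_ne x (n+1) with h | h <;> simp [h, haI, haJ] <;> tauto

private lemma eInsUn : insert (n+1) I ∪ insert (n+1) J = insert (n+1) (I ∪ J) := by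
  ext x; rcases eq_or_ne x (n+1) with h | h <;> simp [h, haI, haJ] <;> tauto

private lemma eIntL : I ∩ insert (n+1) J = I ∩ J := by
  ext x; rcases eq_or_ne x (n+1) with h | h <;> simp [h, haI, haJ] <;> tauto

private lemma eSdL : I \ insert (n+1) J = I \ J := by
  ext x; rcases eq_or_ne x (n+1) with h | h <;> simp [h, haI, haJ] <;> tauto

private lemma eSdR : insert (n+1) J \ I = insert (n+1) (J \ I) := by
  ext x; rcases eq_or_ne x (n+1) with h | h <;> simp [h, haI, haJ] <;> tauto

private lemma eUnL : I ∪ insert (n+1) J = insert (n+1) (I ∪ J) := by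
  ext x; rcases eq_or_ne x (n+1) with h | h <;> simp [h, haI, haJ] <;> tauto

private lemma eIntR : insert (n+1) I ∩ J = I ∩ J := by
  ext x; rcases eq_or_ne x (n+1) with h | h <;> simp [h, haI, haJ] <;> tauto

private lemma eSdIns : insert (n+1) I \ J = insert (n+1) (I \ J) := by
  ext x; rcases eq_or_ne x (n+1) with h | h <;> simp [h, haI, haJ] <;> tauto

private lemma eSdR2 : J \ insert (n+1) I = J \ I := by
  ext x; rcases eq_or_ne x (n+1) with h | h <;> simp [h, haI, haJ] <;> tauto

private lemma eUnR : insert (n+1) I ∪ J = insert (n+1) (I ∪ J) := by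
  ext x; rcases eq_or_ne x (n+1) with h | h <;> simp [h, haI, haJ] <;> tauto

end setlemmas

private lemma card_facts {n : ℕ} {I J : Finset ℕ} (hI : I ⊆ Finset.Icc 1 n)
    (hJ : J ⊆ Finset.Icc 1 n) : (n+1) ∉ I ∧ (n+1) ∉ J ∧ (I ∪ J).card ≤ n := by
  refine ⟨fun h => by simpa using Finset.mem_Icc.1 (hI h),
    fun h => by simpa using Finset.mem_Icc.1 (hJ h), ?_⟩
  calc (I ∪ J).card ≤ (Finset.Icc 1 n).card :=
        Finset.card_le_card (Finset.union_subset hI hJ)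
    _ = n := by rw [Nat.card_Icc]; omega

private lemma sup_le_of_subset {n : ℕ} {I : Finset ℕ} (hI : I ⊆ Finset.Icc 1 n) :
    I.sup id ≤ n := Finset.sup_le fun x hx => (Finset.mem_Icc.1 (hI hx)).2

private lemma total_sum (p11 p10 p01 p00 : ℝ) (hsum : p11 + p10 + p01 + p00 = 1) :
    ∀ n : ℕ, (∑ I ∈ (Finset.Icc 1 n).powerset, ∑ J ∈ (Finset.Icc 1 n).powerset,
      p11 ^ (I ∩ J).card * p10 ^ (I \ J).card * p01 ^ (J \ I).card *
        p00 ^ (n - (I ∪ J).card)) = 1 := by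
  intro n
  induction n with
  | zero => simp
  | succ n ih =>
    have hnot : (n+1) ∉ Finset.Icc 1 n := by simp
    rw [icc_succ, Finset.sum_powerset_insert hnot]
    simp only [Finset.sum_powerset_insert hnot]
    rw [← Finset.sum_add_distrib]
    have key : ∀ I ∈ (Finset.Icc 1 n).powerset, ∀ J ∈ (Finset.Icc 1 n).powerset,
        (p11 ^ (I ∩ J).card * p10 ^ (I \ J).card * p01 ^ (J \ I).card *
          p00 ^ (n + 1 - (I ∪ J).card)
        + p11 ^ (I ∩ insert (n+1) J).card * p10 ^ (I \ insert (n+1) J).card *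
          p01 ^ (insert (n+1) J \ I).card * p00 ^ (n + 1 - (I ∪ insert (n+1) J).card))
        + (p11 ^ (insert (n+1) I ∩ J).card * p10 ^ (insert (n+1) I \ J).card *
          p01 ^ (J \ insert (n+1) I).card * p00 ^ (n + 1 - (insert (n+1) I ∪ J).card)
        + p11 ^ (insert (n+1) I ∩ insert (n+1) J).card *
          p10 ^ (insert (n+1) I \ insert (n+1) J).card *
          p01 ^ (insert (n+1) J \ insert (n+1) I).card *
          p00 ^ (n + 1 - (insert (n+1) I ∪ insert (n+1) J).card))
        = (p11 + p10 + p01 + p00) *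
          (p11 ^ (I ∩ J).card * p10 ^ (I \ J).card * p01 ^ (J \ I).card *
            p00 ^ (n - (I ∪ J).card)) := by
      intro I hI J hJ
      rw [Finset.mem_powerset] at hI hJ
      obtain ⟨haI, haJ, hcard⟩ := card_facts hI hJ
      have hni : (n+1) ∉ I ∩ J := fun h => haI (Finset.mem_inter.1 h).1
      have hndIJ : (n+1) ∉ I \ J := fun h => haI (Finset.mem_sdiff.1 h).1
      have hndJI : (n+1) ∉ J \ I := fun h => haJ (Finset.mem_sdiff.1 h).1
      have hnu : (n+1) ∉ I ∪ J := by simp [haI, haJ]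
      rw [eIntL haI haJ, eSdL haI haJ, eSdR haI haJ, eUnL haI haJ,
        eIntR haI haJ, eSdIns haI haJ, eSdR2 haI haJ, eUnR haI haJ,
        eInsInt haI haJ, eInsSd haI haJ, eInsSd haJ haI, eInsUn haI haJ,
        Finset.card_insert_of_notMem hni, Finset.card_insert_of_notMem hndIJ,
        Finset.card_insert_of_notMem hndJI, Finset.card_insert_of_notMem hnu]
      have h1 : n + 1 - (I ∪ J).card = (n - (I ∪ J).card) + 1 := by omega
      have h2 : n + 1 - ((I ∪ J).card + 1) = n - (I ∪ J).card := by omega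
      rw [h1, h2]
      ring
    have this1 : ∀ I ∈ (Finset.Icc 1 n).powerset,
        ((∑ J ∈ (Finset.Icc 1 n).powerset,
          p11 ^ (I ∩ J).card * p10 ^ (I \ J).card * p01 ^ (J \ I).card *
            p00 ^ (n + 1 - (I ∪ J).card))
        + ∑ J ∈ (Finset.Icc 1 n).powerset,
          p11 ^ (I ∩ insert (n+1) J).card * p10 ^ (I \ insert (n+1) J).card *
            p01 ^ (insert (n+1) J \ I).card * p00 ^ (n + 1 - (I ∪ insert (n+1) J).card))
        + ((∑ J ∈ (Finset.Icc 1 n).powerset,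
          p11 ^ (insert (n+1) I ∩ J).card * p10 ^ (insert (n+1) I \ J).card *
            p01 ^ (J \ insert (n+1) I).card * p00 ^ (n + 1 - (insert (n+1) I ∪ J).card))
        + ∑ J ∈ (Finset.Icc 1 n).powerset,
          p11 ^ (insert (n+1) I ∩ insert (n+1) J).card *
            p10 ^ (insert (n+1) I \ insert (n+1) J).card *
            p01 ^ (insert (n+1) J \ insert (n+1) I).card *
            p00 ^ (n + 1 - (insert (n+1) I ∪ insert (n+1) J).card))
        = ∑ J ∈ (Finset.Icc 1 n).powerset, (p11 + p10 + p01 + p00) *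
          (p11 ^ (I ∩ J).card * p10 ^ (I \ J).card * p01 ^ (J \ I).card *
            p00 ^ (n - (I ∪ J).card)) := by
      intro I hI
      rw [← Finset.sum_add_distrib, ← Finset.sum_add_distrib, ← Finset.sum_add_distrib]
      exact Finset.sum_congr rfl fun J hJ => key I hI J hJ
    rw [Finset.sum_congr rfl this1]
    simp only [← Finset.mul_sum]
    rw [ih, mul_one]
    exact hsum

/-- With `g(I) = 1_{I≠∅}·max I` and the multinomial cell formula
`P(x∈C_I, y∈C_J) = p₁₁^{|I∩J|} p₁₀^{|I\J|} p₀₁^{|J\I|} p₀₀^{n-|I∪J|}` (where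
`p₁₁ = P(x,y∈B)`, `p₁₀ = P(x∈B,y∉B)`, `p₀₁ = P(x∉B,y∈B)`, `p₀₀ = P(x,y∉B)`), the quantity
`A_n = ∑_{I,J⊆{1,…,n}, g(I)=g(J)} P(x∈C_I,y∈C_J)` satisfies `A_{n+1} = p₀₀·A_n + p₁₁`, and if
`p₀₀ < 1` then `A_n = p₁₁/(1-p₀₀) + (p₁₀+p₀₁)/(1-p₀₀)·p₀₀ⁿ`. -/
theorem stmt11 (p11 p10 p01 p00 : ℝ) (h11 : 0 ≤ p11) (h10 : 0 ≤ p10) (h01 : 0 ≤ p01)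
    (h00 : 0 ≤ p00) (hsum : p11 + p10 + p01 + p00 = 1)
    (A : ℕ → ℝ)
    (hA : ∀ n : ℕ, A n =
      ∑ I ∈ (Finset.Icc 1 n).powerset, ∑ J ∈ (Finset.Icc 1 n).powerset,
        if I.sup id = J.sup id then
          p11 ^ (I ∩ J).card * p10 ^ (I \ J).card * p01 ^ (J \ I).card *
            p00 ^ (n - (I ∪ J).card)
        else 0) :
    (∀ n : ℕ, A (n + 1) = p00 * A n + p11) ∧
    (p00 < 1 → ∀ n : ℕ,
      A n = p11 / (1 - p00) + (p10 + p01) / (1 - p00) * p00 ^ n) := by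
  have hrec : ∀ n : ℕ, A (n + 1) = p00 * A n + p11 := by
    intro n
    have hnot : (n+1) ∉ Finset.Icc 1 n := by simp
    rw [hA (n+1), icc_succ, Finset.sum_powerset_insert hnot]
    simp only [Finset.sum_powerset_insert hnot]
    rw [← Finset.sum_add_distrib]
    have key : ∀ I ∈ (Finset.Icc 1 n).powerset, ∀ J ∈ (Finset.Icc 1 n).powerset,
        ((if I.sup id = J.sup id then
            p11 ^ (I ∩ J).card * p10 ^ (I \ J).card * p01 ^ (J \ I).card *
              p00 ^ (n + 1 - (I ∪ J).card) else 0)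
        + (if I.sup id = (insert (n+1) J).sup id then
            p11 ^ (I ∩ insert (n+1) J).card * p10 ^ (I \ insert (n+1) J).card *
              p01 ^ (insert (n+1) J \ I).card * p00 ^ (n + 1 - (I ∪ insert (n+1) J).card) else 0))
        + ((if (insert (n+1) I).sup id = J.sup id then
            p11 ^ (insert (n+1) I ∩ J).card * p10 ^ (insert (n+1) I \ J).card *
              p01 ^ (J \ insert (n+1) I).card * p00 ^ (n + 1 - (insert (n+1) I ∪ J).card) else 0)
        + (if (insert (n+1) I).sup id = (insert (n+1) J).sup id then
            p11 ^ (insert (n+1) I ∩ insert (n+1) J).card *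
              p10 ^ (insert (n+1) I \ insert (n+1) J).card *
              p01 ^ (insert (n+1) J \ insert (n+1) I).card *
              p00 ^ (n + 1 - (insert (n+1) I ∪ insert (n+1) J).card) else 0))
        = p00 * (if I.sup id = J.sup id then
            p11 ^ (I ∩ J).card * p10 ^ (I \ J).card * p01 ^ (J \ I).card *
              p00 ^ (n - (I ∪ J).card) else 0)
          + p11 * (p11 ^ (I ∩ J).card * p10 ^ (I \ J).card * p01 ^ (J \ I).card *
              p00 ^ (n - (I ∪ J).card)) := by
      intro I hI J hJ
      rw [Finset.mem_powerset] at hI hJ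
      obtain ⟨haI, haJ, hcard⟩ := card_facts hI hJ
      have hsI : I.sup id ≤ n := sup_le_of_subset hI
      have hsJ : J.sup id ≤ n := sup_le_of_subset hJ
      have hsupI : (insert (n+1) I).sup id = n + 1 := by
        simp only [Finset.sup_insert, id_eq]
        exact sup_eq_left.2 (by omega)
      have hsupJ : (insert (n+1) J).sup id = n + 1 := by
        simp only [Finset.sup_insert, id_eq]
        exact sup_eq_left.2 (by omega)
      have c2 : ¬ (I.sup id = (insert (n+1) J).sup id) := by rw [hsupJ]; omega
      have c3 : ¬ ((insert (n+1) I).sup id = J.sup id) := by rw [hsupI]; omega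
      have c4 : (insert (n+1) I).sup id = (insert (n+1) J).sup id := by
        rw [hsupI, hsupJ]
      rw [if_neg c2, if_neg c3, if_pos c4]
      have hni : (n+1) ∉ I ∩ J := fun h => haI (Finset.mem_inter.1 h).1
      have hnu : (n+1) ∉ I ∪ J := by simp [haI, haJ]
      rw [eInsInt haI haJ, eInsSd haI haJ, eInsSd haJ haI, eInsUn haI haJ,
        Finset.card_insert_of_notMem hni, Finset.card_insert_of_notMem hnu]
      have h1 : n + 1 - (I ∪ J).card = (n - (I ∪ J).card) + 1 := by omega
      have h2 : n + 1 - ((I ∪ J).card + 1) = n - (I ∪ J).card := by omega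
      rw [h1, h2]
      split_ifs with h <;> ring
    have this1 : ∀ I ∈ (Finset.Icc 1 n).powerset,
        ((∑ J ∈ (Finset.Icc 1 n).powerset,
          if I.sup id = J.sup id then
            p11 ^ (I ∩ J).card * p10 ^ (I \ J).card * p01 ^ (J \ I).card *
              p00 ^ (n + 1 - (I ∪ J).card) else 0)
        + ∑ J ∈ (Finset.Icc 1 n).powerset,
          if I.sup id = (insert (n+1) J).sup id then
            p11 ^ (I ∩ insert (n+1) J).card * p10 ^ (I \ insert (n+1) J).card *
              p01 ^ (insert (n+1) J \ I).card * p00 ^ (n + 1 - (I ∪ insert (n+1) J).card) else 0)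
        + ((∑ J ∈ (Finset.Icc 1 n).powerset,
          if (insert (n+1) I).sup id = J.sup id then
            p11 ^ (insert (n+1) I ∩ J).card * p10 ^ (insert (n+1) I \ J).card *
              p01 ^ (J \ insert (n+1) I).card * p00 ^ (n + 1 - (insert (n+1) I ∪ J).card) else 0)
        + ∑ J ∈ (Finset.Icc 1 n).powerset,
          if (insert (n+1) I).sup id = (insert (n+1) J).sup id then
            p11 ^ (insert (n+1) I ∩ insert (n+1) J).card *
              p10 ^ (insert (n+1) I \ insert (n+1) J).card *
              p01 ^ (insert (n+1) J \ insert (n+1) I).card *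
              p00 ^ (n + 1 - (insert (n+1) I ∪ insert (n+1) J).card) else 0)
        = ∑ J ∈ (Finset.Icc 1 n).powerset,
          (p00 * (if I.sup id = J.sup id then
            p11 ^ (I ∩ J).card * p10 ^ (I \ J).card * p01 ^ (J \ I).card *
              p00 ^ (n - (I ∪ J).card) else 0)
          + p11 * (p11 ^ (I ∩ J).card * p10 ^ (I \ J).card * p01 ^ (J \ I).card *
              p00 ^ (n - (I ∪ J).card))) := by
      intro I hI
      rw [← Finset.sum_add_distrib, ← Finset.sum_add_distrib, ← Finset.sum_add_distrib]
      exact Finset.sum_congr rfl fun J hJ => key I hI J hJ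
    rw [Finset.sum_congr rfl this1]
    simp only [Finset.sum_add_distrib, ← Finset.mul_sum]
    rw [← hA n, total_sum p11 p10 p01 p00 hsum n, mul_one]
  refine ⟨hrec, fun hlt n => ?_⟩
  have hne : 1 - p00 ≠ 0 := by linarith
  induction n with
  | zero =>
    have hA0 : A 0 = 1 := by rw [hA 0]; simp
    rw [hA0]
    field_simp
    linarith
  | succ n ih =>
    rw [hrec n, ih]
    field_simp
    ring
end

section
/- Let M ⊆ ℝ^d be contained in the closed ball of radius C_M about the origin. Let X be uniform on S^{d-1}, R uniform on [-C_M, C_M], independent, and H = {z : ⟨z, X⟩ ≥ R}. Then for all x, y ∈ M: P(x ∈ H) = 1/2 and P(x ∈ H, y ∈ H) = 1/2 - ‖x-y‖·Γ(d/2)/(4√π·C_M·Γ((d+1)/2)). -/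
open MeasureTheory ProbabilityTheory

section AuxStmt15
open Metric Set Pointwise Real

section Aux

/-- The sphere map induced by a linear isometry equivalence. -/
noncomputable def sphereMapAux {E : Type*} [NormedAddCommGroup E] [InnerProductSpace ℝ E]
    (f : E ≃ₗᵢ[ℝ] E) (u : sphere (0 : E) 1) : sphere (0 : E) 1 :=
  ⟨f u, by
    rw [mem_sphere_zero_iff_norm, f.norm_map, ← mem_sphere_zero_iff_norm]
    exact u.2⟩

lemma continuous_sphereMapAux {E : Type*} [NormedAddCommGroup E] [InnerProductSpace ℝ E]
    (f : E ≃ₗᵢ[ℝ] E) : Continuous (sphereMapAux f) :=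
  Continuous.subtype_mk (f.continuous.comp continuous_subtype_val) _

lemma toSphere_map_sphereMapAux {E : Type*} [NormedAddCommGroup E] [InnerProductSpace ℝ E]
    [MeasurableSpace E] [BorelSpace E] (μ : Measure E) (f : E ≃ₗᵢ[ℝ] E)
    (hf : MeasurePreserving f μ μ) :
    Measure.map (sphereMapAux f) μ.toSphere = μ.toSphere := by
  ext s hs
  rw [Measure.map_apply (continuous_sphereMapAux f).measurable hs,
    Measure.toSphere_apply' _ hs,
    Measure.toSphere_apply' _ ((continuous_sphereMapAux f).measurable hs)]
  congr 1
  have h1 : (Subtype.val '' (sphereMapAux f ⁻¹' s)) = f ⁻¹' (Subtype.val '' s) := by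
    ext z
    constructor
    · rintro ⟨u, hu, rfl⟩
      exact ⟨sphereMapAux f u, hu, rfl⟩
    · rintro ⟨w, hw, hwz⟩
      have hz : z ∈ sphere (0 : E) 1 := by
        rw [mem_sphere_zero_iff_norm, ← f.norm_map, ← hwz, ← mem_sphere_zero_iff_norm]
        exact w.2
      refine ⟨⟨z, hz⟩, ?_, rfl⟩
      show sphereMapAux f ⟨z, hz⟩ ∈ s
      have : sphereMapAux f ⟨z, hz⟩ = w := Subtype.ext hwz.symm
      rw [this]; exact hw
  rw [h1]
  have h2 : Ioo (0:ℝ) 1 • (f ⁻¹' (Subtype.val '' s)) = f ⁻¹' (Ioo (0:ℝ) 1 • (Subtype.val '' s)) := by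
    ext z
    simp only [Set.mem_smul_set, Set.mem_preimage]
    constructor
    · rintro ⟨c, hc, a, ha, rfl⟩
      exact ⟨c, hc, f a, ha, (f.map_smul c a).symm⟩
    · rintro ⟨c, hc, a, ha, hz⟩
      refine ⟨c, hc, f.symm a, by simpa using ha, ?_⟩
      apply f.injective
      rw [f.map_smul, f.apply_symm_apply]
      exact hz
  rw [h2]
  have key : ∀ B : Set E, μ (⇑f ⁻¹' B) = μ B := by
    intro B
    have h3 : μ (⇑f ⁻¹' B) = Measure.map (⇑(f.toHomeomorph.toMeasurableEquiv)) μ B :=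
      (MeasurableEquiv.map_apply f.toHomeomorph.toMeasurableEquiv B).symm
    rw [h3]
    have h4 : Measure.map (⇑(f.toHomeomorph.toMeasurableEquiv)) μ = μ := hf.map_eq
    rw [h4]
  exact key _

lemma int_abs_exp_aux : ∫ t : ℝ, |t| * Real.exp (-t^2) = 1 := by
  have h1 : ∀ t : ℝ, |t| * Real.exp (-t^2) = (fun s => s * Real.exp (-s^2)) |t| := by
    intro t; simp [sq_abs]
  simp_rw [h1]
  rw [integral_comp_abs (f := fun s => s * Real.exp (-s^2))]
  have h2 : ∀ x ∈ Ioi (0:ℝ), x * Real.exp (-x^2) = x ^ (1:ℝ) * Real.exp (-x ^ (2:ℝ)) := by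
    intro x hx
    rw [Real.rpow_one, Real.rpow_two]
  rw [setIntegral_congr_fun measurableSet_Ioi h2,
    integral_rpow_mul_exp_neg_rpow zero_lt_two (by norm_num)]
  norm_num [Real.Gamma_one]

lemma int_exp_sq_aux : ∫ t : ℝ, Real.exp (-t^2) = Real.sqrt Real.pi := by
  have := integral_gaussian 1
  simpa using this

lemma gauss_lhs_aux (d : ℕ) (hd : 1 ≤ d) :
    ∫ z : EuclideanSpace ℝ (Fin d), |z ⟨0, hd⟩| * Real.exp (-‖z‖^2)
      = Real.sqrt Real.pi ^ (d - 1) := by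
  classical
  set i0 : Fin d := ⟨0, hd⟩
  set h : Fin d → ℝ → ℝ := fun i => if i = i0 then (fun t => |t| * Real.exp (-t^2))
    else fun t => Real.exp (-t^2) with hh
  have key : ∀ z : EuclideanSpace ℝ (Fin d),
      |z i0| * Real.exp (-‖z‖^2) = ∏ i, h i (z i) := by
    intro z
    have hnorm : ‖z‖^2 = ∑ i, (z i)^2 := by
      rw [EuclideanSpace.norm_eq, Real.sq_sqrt (by positivity)]
      simp [sq_abs]
    have hns : -‖z‖^2 = ∑ i, -(z i)^2 := by rw [hnorm, Finset.sum_neg_distrib]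
    rw [hns, Real.exp_sum,
      Finset.prod_eq_prod_diff_singleton_mul (Finset.mem_univ i0) (fun i => Real.exp (-(z i)^2)),
      Finset.prod_eq_prod_diff_singleton_mul (Finset.mem_univ i0) (fun i => h i (z i))]
    have hdiff : ∀ i ∈ Finset.univ \ {i0}, Real.exp (-(z i)^2) = h i (z i) := by
      intro i hi
      simp only [Finset.mem_sdiff, Finset.mem_singleton] at hi
      simp only [hh, if_neg hi.2]
    rw [Finset.prod_congr rfl hdiff]
    have : h i0 (z i0) = |z i0| * Real.exp (-(z i0)^2) := by rw [hh]; simp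
    rw [this]
    ring
  simp_rw [key]
  have hvp := (EuclideanSpace.volume_preserving_symm_measurableEquiv_toLp (Fin d)).symm
  rw [← hvp.integral_comp (MeasurableEquiv.measurableEmbedding _) (fun z => ∏ i, h i (z i))]
  have : ∀ y : (Fin d) → ℝ, (∏ i, h i (((MeasurableEquiv.toLp 2 ((Fin d) → ℝ)).symm.symm y) i))
      = ∏ i, h i (y i) := fun y => rfl
  simp_rw [this]
  rw [MeasureTheory.integral_fintype_prod_volume_eq_prod (ι := Fin d) h,
    Finset.prod_eq_prod_diff_singleton_mul (Finset.mem_univ i0) (fun i => ∫ x, h i x)]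
  have hdiff : ∀ i ∈ Finset.univ \ {i0}, (∫ x, h i x) = Real.sqrt Real.pi := by
    intro i hi
    simp only [Finset.mem_sdiff, Finset.mem_singleton] at hi
    simp only [hh, if_neg hi.2]
    exact int_exp_sq_aux
  rw [Finset.prod_congr rfl hdiff, Finset.prod_const]
  have h0 : (∫ x, h i0 x) = 1 := by simp only [hh, if_pos rfl]; exact int_abs_exp_aux
  rw [h0, mul_one]
  congr 1
  rw [Finset.card_sdiff_of_subset (by simp)]
  simp

lemma int_volumeIoiPow_aux (d : ℕ) (hd : 1 ≤ d) :
    ∫ r : Ioi (0:ℝ), r.1 * Real.exp (-r.1^2) ∂(Measure.volumeIoiPow (d-1))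
      = (1/2) * Real.Gamma (((d:ℝ)+1)/2) := by
  rw [Measure.volumeIoiPow]
  simp only [ENNReal.ofReal]
  rw [integral_withDensity_eq_integral_smul ((measurable_subtype_coe.pow_const _).real_toNNReal),
    integral_subtype_comap measurableSet_Ioi
      (fun a => Real.toNNReal (a^(d-1)) • (a * Real.exp (-a^2)))]
  rw [setIntegral_congr_fun measurableSet_Ioi
    (g := fun x => x ^ ((d:ℝ)) * Real.exp (-x ^ (2:ℝ))) ?_]
  · rw [integral_rpow_mul_exp_neg_rpow zero_lt_two
      (lt_of_lt_of_le neg_one_lt_zero (Nat.cast_nonneg d))]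
  · intro x hx
    have hx' : (0:ℝ) < x := hx
    show Real.toNNReal (x^(d-1)) • (x * Real.exp (-x^2)) = x ^ ((d:ℝ)) * Real.exp (-x ^ (2:ℝ))
    rw [NNReal.smul_def, smul_eq_mul, Real.coe_toNNReal _ (by positivity),
      Real.rpow_natCast, Real.rpow_two, ← mul_assoc]
    congr 1
    rw [← pow_succ]
    congr 1
    omega

lemma gauss_polar_aux (d : ℕ) (hd : 1 ≤ d) :
    ∫ z : EuclideanSpace ℝ (Fin d), |z ⟨0, hd⟩| * Real.exp (-‖z‖^2)
      = (∫ u : sphere (0 : EuclideanSpace ℝ (Fin d)) 1,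
            |(u : EuclideanSpace ℝ (Fin d)) ⟨0, hd⟩| ∂((volume).toSphere))
          * ((1/2) * Real.Gamma (((d:ℝ)+1)/2)) := by
  haveI : Nonempty (Fin d) := ⟨⟨0, hd⟩⟩
  haveI : Nontrivial (EuclideanSpace ℝ (Fin d)) := by
    apply Module.nontrivial_of_finrank_pos (R := ℝ)
    rw [finrank_euclideanSpace_fin]; omega
  set i0 : Fin d := ⟨0, hd⟩
  set f : EuclideanSpace ℝ (Fin d) → ℝ := fun z => |z i0| * Real.exp (-‖z‖^2) with hf
  set G : sphere (0 : EuclideanSpace ℝ (Fin d)) 1 × Ioi (0:ℝ) → ℝ :=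
    fun p => |(p.1 : EuclideanSpace ℝ (Fin d)) i0| * (p.2.1 * Real.exp (-p.2.1^2)) with hG
  have step1 : ∫ z, f z = ∫ x : ({(0 : EuclideanSpace ℝ (Fin d))}ᶜ : Set _), f x.1
      ∂((volume).comap Subtype.val) := by
    rw [integral_subtype_comap (measurableSet_singleton _).compl,
      MeasureTheory.restrict_compl_singleton]
  have hptw : ∀ x : ({(0 : EuclideanSpace ℝ (Fin d))}ᶜ : Set _),
      G (homeomorphUnitSphereProd _ x) = f x.1 := by
    intro x
    have hx : x.1 ≠ 0 := x.2
    have hn : ‖x.1‖ ≠ 0 := norm_ne_zero_iff.mpr hx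
    simp only [hG, hf, homeomorphUnitSphereProd_apply_fst_coe,
      homeomorphUnitSphereProd_apply_snd_coe, PiLp.smul_apply, smul_eq_mul, abs_mul,
      abs_inv, abs_norm]
    field_simp
  have step2 : ∫ x : ({(0 : EuclideanSpace ℝ (Fin d))}ᶜ : Set _), f x.1
      ∂((volume).comap Subtype.val)
      = ∫ p, G p ∂((volume).toSphere.prod (Measure.volumeIoiPow
          (Module.finrank ℝ (EuclideanSpace ℝ (Fin d)) - 1))) := by
    rw [← (volume : Measure (EuclideanSpace ℝ (Fin d))).measurePreserving_homeomorphUnitSphereProd.integral_comp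
      (Homeomorph.measurableEmbedding _) G]
    exact (integral_congr_ae (Filter.Eventually.of_forall hptw)).symm
  rw [step1, step2, finrank_euclideanSpace_fin]
  simp only [hG]
  rw [MeasureTheory.integral_prod_mul
    (f := fun u : sphere (0 : EuclideanSpace ℝ (Fin d)) 1 => |(u : EuclideanSpace ℝ (Fin d)) i0|)
    (g := fun r : Ioi (0:ℝ) => r.1 * Real.exp (-r.1^2))]
  rw [int_volumeIoiPow_aux d hd]

lemma sphere_univ_toReal_aux (d : ℕ) (hd : 1 ≤ d) :
    ((volume : Measure (EuclideanSpace ℝ (Fin d))).toSphere Set.univ).toReal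
      = (d : ℝ) * (Real.sqrt Real.pi ^ d / Real.Gamma ((d:ℝ)/2 + 1)) := by
  haveI : Nonempty (Fin d) := ⟨⟨0, hd⟩⟩
  rw [Measure.toSphere_apply_univ, EuclideanSpace.volume_ball]
  rw [ENNReal.toReal_mul, ENNReal.toReal_mul]
  simp only [ENNReal.toReal_pow, ENNReal.toReal_ofReal zero_le_one,
    one_pow, Fintype.card_fin, finrank_euclideanSpace_fin]
  rw [ENNReal.toReal_ofReal (by positivity), one_mul]
  simp

lemma sphere_abs_coord_aux (d : ℕ) (hd : 1 ≤ d) :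
    ∫ u : sphere (0 : EuclideanSpace ℝ (Fin d)) 1,
        |(u : EuclideanSpace ℝ (Fin d)) ⟨0, hd⟩| ∂((volume).toSphere)
      = Real.sqrt Real.pi ^ (d - 1) * 2 / Real.Gamma (((d:ℝ)+1)/2) := by
  have h1 := gauss_polar_aux d hd
  rw [gauss_lhs_aux d hd] at h1
  have hG : 0 < Real.Gamma (((d:ℝ)+1)/2) := Real.Gamma_pos_of_pos (by positivity)
  field_simp at h1 ⊢
  linarith

lemma sphere_abs_inner_aux (d : ℕ) (hd : 1 ≤ d) (v : EuclideanSpace ℝ (Fin d)) :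
    ∫ u : sphere (0 : EuclideanSpace ℝ (Fin d)) 1,
        |(inner ℝ v ((u : EuclideanSpace ℝ (Fin d))) : ℝ)| ∂((volume).toSphere)
      = ‖v‖ * (Real.sqrt Real.pi ^ (d - 1) * 2 / Real.Gamma (((d:ℝ)+1)/2)) := by
  rcases eq_or_ne v 0 with rfl | hv
  · simp
  set i0 : Fin d := ⟨0, hd⟩
  set w : EuclideanSpace ℝ (Fin d) := ‖v‖⁻¹ • v with hw
  have hnw : ‖w‖ = 1 := by
    rw [hw, norm_smul, norm_inv, norm_norm, inv_mul_cancel₀ (norm_ne_zero_iff.mpr hv)]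
  set e0 : EuclideanSpace ℝ (Fin d) := EuclideanSpace.single i0 1 with he0
  have hne0 : ‖e0‖ = 1 := by rw [he0, EuclideanSpace.norm_single, norm_one]
  set f := Submodule.reflection (ℝ ∙ (w - e0))ᗮ with hf
  have hfw : f w = e0 := Submodule.reflection_sub (by rw [hnw, hne0])
  have step1 : ∀ u : sphere (0 : EuclideanSpace ℝ (Fin d)) 1,
      |(inner ℝ v ((u : EuclideanSpace ℝ (Fin d))) : ℝ)|
        = ‖v‖ * |(inner ℝ w ((u : EuclideanSpace ℝ (Fin d))) : ℝ)| := by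
    intro u
    rw [hw, real_inner_smul_left, abs_mul, abs_inv, abs_norm, ← mul_assoc,
      mul_inv_cancel₀ (norm_ne_zero_iff.mpr hv), one_mul]
  simp_rw [step1]
  rw [MeasureTheory.integral_const_mul]
  congr 1
  have hinv := toSphere_map_sphereMapAux (volume : Measure (EuclideanSpace ℝ (Fin d))) f.symm
    f.symm.measurePreserving
  calc ∫ u : sphere (0 : EuclideanSpace ℝ (Fin d)) 1,
        |(inner ℝ w ((u : EuclideanSpace ℝ (Fin d))) : ℝ)| ∂((volume).toSphere)
      = ∫ u : sphere (0 : EuclideanSpace ℝ (Fin d)) 1,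
        |(inner ℝ w ((u : EuclideanSpace ℝ (Fin d))) : ℝ)|
          ∂(Measure.map (sphereMapAux f.symm) (volume).toSphere) := by rw [hinv]
    _ = ∫ u : sphere (0 : EuclideanSpace ℝ (Fin d)) 1,
        |(inner ℝ w ((sphereMapAux f.symm u : EuclideanSpace ℝ (Fin d))) : ℝ)|
          ∂((volume).toSphere) := by
        rw [integral_map (continuous_sphereMapAux f.symm).aemeasurable]
        exact (Continuous.abs (Continuous.inner continuous_const
          continuous_subtype_val)).aestronglyMeasurable
    _ = ∫ u : sphere (0 : EuclideanSpace ℝ (Fin d)) 1,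
        |(u : EuclideanSpace ℝ (Fin d)) i0| ∂((volume).toSphere) := by
        apply integral_congr_ae
        apply Filter.Eventually.of_forall
        intro u
        show |(inner ℝ w ((sphereMapAux f.symm u : EuclideanSpace ℝ (Fin d))) : ℝ)|
          = |(u : EuclideanSpace ℝ (Fin d)) i0|
        have h2 : (inner ℝ w ((sphereMapAux f.symm u : EuclideanSpace ℝ (Fin d))) : ℝ)
            = (inner ℝ e0 ((u : EuclideanSpace ℝ (Fin d))) : ℝ) := by
          have h3 : (sphereMapAux f.symm u : EuclideanSpace ℝ (Fin d))
              = f.symm (u : EuclideanSpace ℝ (Fin d)) := rfl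
          rw [h3, ← hfw, ← f.inner_map_map w (f.symm u), f.apply_symm_apply]
        rw [h2, he0, EuclideanSpace.inner_single_left]
        simp
    _ = Real.sqrt Real.pi ^ (d - 1) * 2 / Real.Gamma (((d:ℝ)+1)/2) := sphere_abs_coord_aux d hd

lemma continuous_neg_sphere_aux {E : Type*} [NormedAddCommGroup E] [InnerProductSpace ℝ E] :
    Continuous (fun u : sphere (0 : E) 1 => -u) :=
  Continuous.subtype_mk (continuous_subtype_val.neg) _

lemma neg_invariant_toSphere_aux (d : ℕ) :
    Measure.map (fun u : sphere (0 : EuclideanSpace ℝ (Fin d)) 1 => -u)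
      (volume : Measure (EuclideanSpace ℝ (Fin d))).toSphere
      = (volume : Measure (EuclideanSpace ℝ (Fin d))).toSphere := by
  have h1 : (fun u : sphere (0 : EuclideanSpace ℝ (Fin d)) 1 => -u)
      = sphereMapAux (LinearIsometryEquiv.neg ℝ) := by
    funext u; exact Subtype.ext rfl
  rw [h1]
  exact toSphere_map_sphereMapAux _ _ (LinearIsometryEquiv.neg ℝ).measurePreserving

lemma integral_inner_sphere_zero_aux (d : ℕ) (x : EuclideanSpace ℝ (Fin d))
    (m : Measure (sphere (0 : EuclideanSpace ℝ (Fin d)) 1))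
    (hm : Measure.map (fun u => -u) m = m) :
    ∫ u, (inner ℝ x ((u : EuclideanSpace ℝ (Fin d))) : ℝ) ∂m = 0 := by
  set A := ∫ u, (inner ℝ x ((u : EuclideanSpace ℝ (Fin d))) : ℝ) ∂m with hA
  have step : A = -A := by
    calc A = ∫ u, (inner ℝ x ((u : EuclideanSpace ℝ (Fin d))) : ℝ)
          ∂(Measure.map (fun u => -u) m) := by rw [hm]
      _ = ∫ u, (inner ℝ x (((-u : sphere (0 : EuclideanSpace ℝ (Fin d)) 1)
            : EuclideanSpace ℝ (Fin d))) : ℝ) ∂m := by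
          rw [integral_map continuous_neg_sphere_aux.aemeasurable]
          exact (Continuous.inner continuous_const continuous_subtype_val).aestronglyMeasurable
      _ = ∫ u, -(inner ℝ x ((u : EuclideanSpace ℝ (Fin d))) : ℝ) ∂m := by
          apply integral_congr_ae; apply Filter.Eventually.of_forall; intro u
          show (inner ℝ x (((-u : sphere _ 1) : EuclideanSpace ℝ (Fin d))) : ℝ) = _
          rw [coe_neg_sphere, inner_neg_right]
      _ = -A := by rw [integral_neg]
  linarith

lemma prob_machine_aux {Ω : Type*} [MeasurableSpace Ω] (P : Measure Ω) [IsProbabilityMeasure P]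
    (d : ℕ) (C : ℝ) (hC : 0 < C)
    (X : Ω → sphere (0 : EuclideanSpace ℝ (Fin d)) 1) (hX : Measurable X)
    (R : Ω → ℝ) (hR : Measurable R)
    (hRunif : Measure.map R P = (ENNReal.ofReal (2 * C))⁻¹ • volume.restrict (Set.Icc (-C) C))
    (hindep : IndepFun X R P)
    (φ : sphere (0 : EuclideanSpace ℝ (Fin d)) 1 → ℝ) (hφ : Continuous φ)
    (hbound : ∀ u, |φ u| ≤ C) :
    (P {ω | R ω ≤ φ (X ω)}).toReal
      = ((∫ u, φ u ∂(Measure.map X P)) + C) / (2 * C) := by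
  haveI : IsProbabilityMeasure (Measure.map X P) := Measure.isProbabilityMeasure_map hX.aemeasurable
  have hjoint : Measure.map (fun ω => (X ω, R ω)) P = (Measure.map X P).prod (Measure.map R P) :=
    (indepFun_iff_map_prod_eq_prod_map_map hX.aemeasurable hR.aemeasurable).mp hindep
  set S : Set (sphere (0 : EuclideanSpace ℝ (Fin d)) 1 × ℝ) := {p | p.2 ≤ φ p.1} with hSdef
  have hS : MeasurableSet S := measurableSet_le measurable_snd (hφ.measurable.comp measurable_fst)
  have hset : {ω | R ω ≤ φ (X ω)} = (fun ω => (X ω, R ω)) ⁻¹' S := rfl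
  rw [hset, ← Measure.map_apply (hX.prodMk hR) hS, hjoint, Measure.prod_apply hS]
  have hsec : ∀ u, (Measure.map R P) (Prod.mk u ⁻¹' S) = ENNReal.ofReal ((φ u + C) / (2 * C)) := by
    intro u
    have h1 : Prod.mk u ⁻¹' S = Iic (φ u) := by ext r; simp [hSdef]
    have hb := hbound u
    have hb1 : -C ≤ φ u := by cases abs_le.mp hb; assumption
    have hb2 : φ u ≤ C := by cases abs_le.mp hb; assumption
    rw [h1, hRunif, Measure.smul_apply, Measure.restrict_apply measurableSet_Iic]
    have h2 : Iic (φ u) ∩ Icc (-C) C = Icc (-C) (φ u) := by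
      ext r; simp only [mem_inter_iff, mem_Iic, mem_Icc]
      constructor
      · rintro ⟨h3, h4, h5⟩; exact ⟨h4, h3⟩
      · rintro ⟨h4, h3⟩; exact ⟨h3, h4, le_trans h3 hb2⟩
    rw [h2, Real.volume_Icc, smul_eq_mul, ENNReal.ofReal_div_of_pos (by positivity),
      ENNReal.div_eq_inv_mul]
    congr 2
    ring
  simp_rw [hsec]
  have hint : Integrable (fun u => (φ u + C) / (2 * C)) (Measure.map X P) := by
    refine ⟨(((hφ.add continuous_const).div_const _)).aestronglyMeasurable, ?_⟩
    apply HasFiniteIntegral.of_bounded (C := 1)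
    apply ae_of_all
    intro u
    have hb := hbound u
    rw [Real.norm_eq_abs, abs_div, abs_of_pos (by positivity : (0:ℝ) < 2 * C),
      div_le_one (by positivity)]
    have : |φ u + C| ≤ |φ u| + C := by
      calc |φ u + C| ≤ |φ u| + |C| := abs_add_le _ _
        _ = |φ u| + C := by rw [abs_of_pos hC]
    linarith
  have hnn : 0 ≤ᵐ[Measure.map X P] (fun u => (φ u + C) / (2 * C)) := by
    apply ae_of_all
    intro u
    have hb1 : -C ≤ φ u := by cases abs_le.mp (hbound u); assumption
    exact div_nonneg (by linarith) (by positivity)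
  rw [← ofReal_integral_eq_lintegral_ofReal hint hnn,
    ENNReal.toReal_ofReal (integral_nonneg (fun u => by
      have hb1 : -C ≤ φ u := by cases abs_le.mp (hbound u); assumption
      exact div_nonneg (by linarith) (by positivity)))]
  have hφint : Integrable φ (Measure.map X P) :=
    ⟨hφ.aestronglyMeasurable, HasFiniteIntegral.of_bounded (C := C)
      (ae_of_all _ fun u => by rw [Real.norm_eq_abs]; exact hbound u)⟩
  rw [integral_div, integral_add hφint (integrable_const C), integral_const, probReal_univ,
    one_smul]

end Aux

end AuxStmt15

open Metric Set Pointwise Real in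
/-- Let `M ⊆ ℝ^d` be contained in the closed ball of radius `C` about the origin, let `X` be
uniform on `S^{d-1}`, `R` uniform on `[-C, C]`, independent, and
`H = {z : ⟨z, X⟩ ≥ R}` the random half-space.  Then for all `x, y ∈ M`: `P(x ∈ H) = 1/2` and
`P(x ∈ H, y ∈ H) = 1/2 - ‖x-y‖·Γ(d/2)/(4√π·C·Γ((d+1)/2))`. -/
theorem stmt15 {Ω : Type*} [MeasurableSpace Ω] (P : Measure Ω) [IsProbabilityMeasure P]
    (d : ℕ) (hd : 1 ≤ d) (C : ℝ) (hC : 0 < C)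
    (X : Ω → Metric.sphere (0 : EuclideanSpace ℝ (Fin d)) 1) (hX : Measurable X)
    (R : Ω → ℝ) (hR : Measurable R)
    (hXunif : Measure.map X P =
      (((volume : Measure (EuclideanSpace ℝ (Fin d))).toSphere Set.univ)⁻¹ •
        (volume : Measure (EuclideanSpace ℝ (Fin d))).toSphere))
    (hRunif : Measure.map R P =
      (ENNReal.ofReal (2 * C))⁻¹ • volume.restrict (Set.Icc (-C) C))
    (hindep : IndepFun X R P)
    (x y : EuclideanSpace ℝ (Fin d)) (hx : ‖x‖ ≤ C) (hy : ‖y‖ ≤ C) :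
    (P {ω | R ω ≤ (inner ℝ x ((X ω : EuclideanSpace ℝ (Fin d))) : ℝ)}).toReal = 1 / 2 ∧
    (P {ω | R ω ≤ (inner ℝ x ((X ω : EuclideanSpace ℝ (Fin d))) : ℝ) ∧
        R ω ≤ (inner ℝ y ((X ω : EuclideanSpace ℝ (Fin d))) : ℝ)}).toReal =
      1 / 2 - ‖x - y‖ * Real.Gamma (d / 2) /
        (4 * Real.sqrt Real.pi * C * Real.Gamma ((d + 1) / 2)) := by
  haveI : IsProbabilityMeasure (Measure.map X P) := Measure.isProbabilityMeasure_map hX.aemeasurable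
  have hneg : Measure.map (fun u => -u) (Measure.map X P) = Measure.map X P := by
    rw [hXunif, Measure.map_smul, neg_invariant_toSphere_aux]
  have hmean : ∀ v : EuclideanSpace ℝ (Fin d),
      ∫ u, (inner ℝ v ((u : EuclideanSpace ℝ (Fin d))) : ℝ) ∂(Measure.map X P) = 0 :=
    fun v => integral_inner_sphere_zero_aux d v _ hneg
  have hπ : (0:ℝ) < Real.sqrt Real.pi := Real.sqrt_pos.mpr Real.pi_pos
  have hdpos : (0:ℝ) < (d:ℝ) := by
    have : (1:ℝ) ≤ (d:ℝ) := by exact_mod_cast hd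
    linarith
  have hG1 : 0 < Real.Gamma (((d:ℝ)+1)/2) := Real.Gamma_pos_of_pos (by positivity)
  have hG2 : 0 < Real.Gamma ((d:ℝ)/2) := Real.Gamma_pos_of_pos (by positivity)
  have habs : ∀ v : EuclideanSpace ℝ (Fin d),
      ∫ u, |(inner ℝ v ((u : EuclideanSpace ℝ (Fin d))) : ℝ)| ∂(Measure.map X P)
        = ‖v‖ * (Real.Gamma ((d:ℝ)/2) / (Real.sqrt Real.pi * Real.Gamma (((d:ℝ)+1)/2))) := by
    intro v
    rw [hXunif, integral_smul_measure, sphere_abs_inner_aux d hd v, ENNReal.toReal_inv,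
      sphere_univ_toReal_aux d hd,
      Real.Gamma_add_one (ne_of_gt (by positivity : (0:ℝ) < (d:ℝ)/2))]
    have hsd : Real.sqrt Real.pi ^ d = Real.sqrt Real.pi ^ (d-1) * Real.sqrt Real.pi := by
      rw [← pow_succ]; congr 1; omega
    rw [hsd, smul_eq_mul]
    have hsp : (0:ℝ) < Real.sqrt Real.pi ^ (d-1) := by positivity
    field_simp
  have hbound1 : ∀ (v : EuclideanSpace ℝ (Fin d)), ‖v‖ ≤ C →
      ∀ u : sphere (0 : EuclideanSpace ℝ (Fin d)) 1,
        |(inner ℝ v ((u : EuclideanSpace ℝ (Fin d))) : ℝ)| ≤ C := by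
    intro v hv u
    have h1 := abs_real_inner_le_norm v (u : EuclideanSpace ℝ (Fin d))
    rw [mem_sphere_zero_iff_norm.mp u.2, mul_one] at h1
    exact h1.trans hv
  constructor
  · have h1 := prob_machine_aux P d C hC X hX R hR hRunif hindep
      (fun u => (inner ℝ x ((u : EuclideanSpace ℝ (Fin d))) : ℝ))
      (Continuous.inner continuous_const continuous_subtype_val)
      (hbound1 x hx)
    rw [h1, hmean x, zero_add]
    rw [div_eq_iff (by positivity)]
    ring
  · set φ : sphere (0 : EuclideanSpace ℝ (Fin d)) 1 → ℝ :=
      fun u => min (inner ℝ x ((u : EuclideanSpace ℝ (Fin d))) : ℝ)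
        (inner ℝ y ((u : EuclideanSpace ℝ (Fin d))) : ℝ) with hφdef
    have hsetEq : {ω | R ω ≤ (inner ℝ x ((X ω : EuclideanSpace ℝ (Fin d))) : ℝ) ∧
        R ω ≤ (inner ℝ y ((X ω : EuclideanSpace ℝ (Fin d))) : ℝ)} = {ω | R ω ≤ φ (X ω)} := by
      ext ω
      simp only [Set.mem_setOf_eq, hφdef, le_min_iff]
    rw [hsetEq]
    have hcont : Continuous φ := Continuous.min
      (Continuous.inner continuous_const continuous_subtype_val)
      (Continuous.inner continuous_const continuous_subtype_val)
    have hb : ∀ u, |φ u| ≤ C := by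
      intro u
      have h1 := hbound1 x hx u
      have h2 := hbound1 y hy u
      rw [abs_le] at h1 h2 ⊢
      constructor
      · exact le_min h1.1 h2.1
      · exact le_trans (min_le_left _ _) h1.2
    rw [prob_machine_aux P d C hC X hX R hR hRunif hindep φ hcont hb]
    have hminEq : ∀ u : sphere (0 : EuclideanSpace ℝ (Fin d)) 1,
        φ u = (((inner ℝ x ((u : EuclideanSpace ℝ (Fin d))) : ℝ)
          + (inner ℝ y ((u : EuclideanSpace ℝ (Fin d))) : ℝ))
          - |(inner ℝ (x - y) ((u : EuclideanSpace ℝ (Fin d))) : ℝ)|) / 2 := by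
      intro u
      rw [hφdef]
      simp only [inner_sub_left]
      rcases le_total ((inner ℝ x ((u : EuclideanSpace ℝ (Fin d))) : ℝ))
        ((inner ℝ y ((u : EuclideanSpace ℝ (Fin d))) : ℝ)) with h | h
      · rw [min_eq_left h, abs_of_nonpos (by linarith)]; ring
      · rw [min_eq_right h, abs_of_nonneg (by linarith)]; ring
    have hIv : ∀ v : EuclideanSpace ℝ (Fin d),
        Integrable (fun u : sphere (0 : EuclideanSpace ℝ (Fin d)) 1 =>
          (inner ℝ v ((u : EuclideanSpace ℝ (Fin d))) : ℝ)) (Measure.map X P) := by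
      intro v
      refine ⟨(Continuous.inner continuous_const continuous_subtype_val).aestronglyMeasurable, ?_⟩
      apply HasFiniteIntegral.of_bounded (C := ‖v‖)
      apply ae_of_all
      intro u
      rw [Real.norm_eq_abs]
      have h1 := abs_real_inner_le_norm v (u : EuclideanSpace ℝ (Fin d))
      rw [mem_sphere_zero_iff_norm.mp u.2, mul_one] at h1
      exact h1
    have hint : ∫ u, φ u ∂(Measure.map X P)
        = -(‖x - y‖ * (Real.Gamma ((d:ℝ)/2)
            / (Real.sqrt Real.pi * Real.Gamma (((d:ℝ)+1)/2)))) / 2 := by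
      have h0 := integral_congr_ae (μ := Measure.map X P)
        (Filter.Eventually.of_forall hminEq)
      have hxy : Integrable (fun u : sphere (0 : EuclideanSpace ℝ (Fin d)) 1 =>
          (inner ℝ x ((u : EuclideanSpace ℝ (Fin d))) : ℝ)
          + (inner ℝ y ((u : EuclideanSpace ℝ (Fin d))) : ℝ)) (Measure.map X P) :=
        (hIv x).add (hIv y)
      have habsint : Integrable (fun u : sphere (0 : EuclideanSpace ℝ (Fin d)) 1 =>
          |(inner ℝ (x - y) ((u : EuclideanSpace ℝ (Fin d))) : ℝ)|) (Measure.map X P) :=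
        (hIv (x - y)).abs
      rw [h0, integral_div, integral_sub hxy habsint,
        integral_add (hIv x) (hIv y), hmean x, hmean y, habs (x - y)]
      ring
    rw [hint]
    have hπ' : Real.sqrt Real.pi ≠ 0 := ne_of_gt hπ
    have hG1' : Real.Gamma (((d:ℝ)+1)/2) ≠ 0 := ne_of_gt hG1
    have hC'' : C ≠ 0 := ne_of_gt hC
    field_simp
    ring
end
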